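/- arXiv:1211.7128 — 4 statements merged into one kernel-verified Lean document; each statement's English description precedes it below -/
import Mathlib

section
/- The number of lattice points in the l^1 ball of radius p centered at a lattice point in Z^k equals the sum over i from 0 to k of 2^i * C(k,i) * C(p,i). -/
open Finset

private def Dl (k p : ℕ) : ℕ := ∑ i ∈ Finset.range (k + 1), 2 ^ i * k.choose i * p.choose i

private noncomputable def Bl (k p : ℕ) : Finset (Fin k → ℤ) :=
  (Fintype.piFinset fun _ => Finset.Icc (-(p : ℤ)) (p : ℤ)).filter
    (fun x => ∑ i, |x i| ≤ (p : ℤ))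

private lemma mem_Bl {k p : ℕ} {x : Fin k → ℤ} : x ∈ Bl k p ↔ ∑ i, |x i| ≤ (p : ℤ) := by
  simp only [Bl, Finset.mem_filter, Fintype.mem_piFinset, Finset.mem_Icc, and_iff_right_iff_imp]
  intro h i
  have : |x i| ≤ (p : ℤ) :=
    le_trans (Finset.single_le_sum (fun j _ => abs_nonneg (x j)) (Finset.mem_univ i)) h
  constructor <;> [linarith [neg_abs_le (x i)]; linarith [le_abs_self (x i)]]

private lemma hockey (p m : ℕ) : ∑ j ∈ range p, j.choose m = p.choose (m + 1) := by
  induction p with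
  | zero => simp
  | succ n ih =>
    rw [Finset.sum_range_succ, ih, Nat.choose_succ_succ]
    simp only [Nat.succ_eq_add_one]
    omega

private lemma D_rec (k p : ℕ) : Dl (k + 1) p = Dl k p + 2 * ∑ j ∈ range p, Dl k j := by
  have h2 : ∑ j ∈ range p, Dl k j
      = ∑ i ∈ range (k + 1), 2 ^ i * k.choose i * p.choose (i + 1) := by
    simp only [Dl]
    rw [Finset.sum_comm]
    refine Finset.sum_congr rfl fun i _ => ?_
    rw [← Finset.mul_sum, hockey]
  have h2' : 2 * ∑ j ∈ range p, Dl k j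
      = ∑ i ∈ range (k + 1), 2 ^ (i + 1) * k.choose i * p.choose (i + 1) := by
    rw [h2, Finset.mul_sum]
    exact Finset.sum_congr rfl fun i _ => by ring
  rw [h2']
  have hD : Dl k p
      = 1 + ∑ i ∈ range (k + 1), 2 ^ (i + 1) * k.choose (i + 1) * p.choose (i + 1) := by
    simp only [Dl]
    rw [Finset.sum_range_succ' (fun i => 2 ^ i * k.choose i * p.choose i) k,
      Finset.sum_range_succ (fun i => 2 ^ (i + 1) * k.choose (i + 1) * p.choose (i + 1)) k]
    simp [Nat.choose_succ_self]
    omega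
  have hD1 : Dl (k + 1) p
      = 1 + ∑ i ∈ range (k + 1), 2 ^ (i + 1) * (k + 1).choose (i + 1) * p.choose (i + 1) := by
    simp only [Dl]
    rw [Finset.sum_range_succ' (fun i => 2 ^ i * (k + 1).choose i * p.choose i) (k + 1)]
    simp only [pow_zero, Nat.choose_zero_right, Nat.choose_zero_right, mul_one, one_mul]
    omega
  rw [hD1, hD]
  have hsplit : ∀ i ∈ range (k + 1),
      2 ^ (i + 1) * (k + 1).choose (i + 1) * p.choose (i + 1)
        = 2 ^ (i + 1) * k.choose (i + 1) * p.choose (i + 1)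
          + 2 ^ (i + 1) * k.choose i * p.choose (i + 1) := by
    intro i _
    rw [Nat.choose_succ_succ]
    ring
  rw [Finset.sum_congr rfl hsplit, Finset.sum_add_distrib]
  omega

private lemma sum_Icc_abs (f : ℕ → ℕ) (p : ℕ) :
    ∑ v ∈ Finset.Icc (-(p : ℤ)) (p : ℤ), f (p - v.natAbs)
      = f p + 2 * ∑ j ∈ range p, f j := by
  have hsplit : Finset.Icc (-(p : ℤ)) (p : ℤ)
      = Finset.Ico (-(p : ℤ)) 0 ∪ Finset.Icc 0 (p : ℤ) := by
    ext v
    simp only [Finset.mem_Icc, Finset.mem_Ico, Finset.mem_union]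
    omega
  have hdisj : Disjoint (Finset.Ico (-(p : ℤ)) 0) (Finset.Icc 0 (p : ℤ)) := by
    rw [Finset.disjoint_left]
    intro v hv hv'
    simp only [Finset.mem_Icc, Finset.mem_Ico] at hv hv'
    omega
  rw [hsplit, Finset.sum_union hdisj]
  have hneg : ∑ v ∈ Finset.Ico (-(p : ℤ)) 0, f (p - v.natAbs) = ∑ j ∈ range p, f j := by
    apply Finset.sum_nbij' (i := fun v => p - v.natAbs) (j := fun j => (j : ℤ) - p)
    · intro v hv
      simp only [Finset.mem_Ico] at hv
      simp only [Finset.mem_range]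
      omega
    · intro j hj
      simp only [Finset.mem_range] at hj
      simp only [Finset.mem_Ico]
      omega
    · intro v hv
      simp only [Finset.mem_Ico] at hv
      omega
    · intro j hj
      simp only [Finset.mem_range] at hj
      omega
    · intro v hv; rfl
  have hpos : ∑ v ∈ Finset.Icc 0 (p : ℤ), f (p - v.natAbs)
      = f p + ∑ j ∈ range p, f j := by
    have : ∑ v ∈ Finset.Icc 0 (p : ℤ), f (p - v.natAbs) = ∑ j ∈ range (p + 1), f j := by
      apply Finset.sum_nbij' (i := fun v => p - v.natAbs) (j := fun j => (p : ℤ) - j)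
      · intro v hv
        simp only [Finset.mem_Icc] at hv
        simp only [Finset.mem_range]
        omega
      · intro j hj
        simp only [Finset.mem_range] at hj
        simp only [Finset.mem_Icc]
        omega
      · intro v hv
        simp only [Finset.mem_Icc] at hv
        omega
      · intro j hj
        simp only [Finset.mem_range] at hj
        omega
      · intro v hv; rfl
    rw [this, Finset.sum_range_succ, Nat.add_comm]
  rw [hneg, hpos]
  ring

private lemma Bl_zero (p : ℕ) : (Bl 0 p).card = 1 := by
  have : Bl 0 p = {fun i => i.elim0} := by
    ext x
    simp only [Finset.mem_singleton]
    constructor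
    · intro _; ext i; exact i.elim0
    · intro h; rw [mem_Bl]; simp
  rw [this, Finset.card_singleton]

private lemma N_rec (k p : ℕ) :
    (Bl (k + 1) p).card = ∑ v ∈ Finset.Icc (-(p : ℤ)) (p : ℤ), (Bl k (p - v.natAbs)).card := by
  rw [Finset.card_eq_sum_card_fiberwise (f := fun x => x (Fin.last k))
    (t := Finset.Icc (-(p : ℤ)) (p : ℤ))]
  · refine Finset.sum_congr rfl fun v hv => ?_
    simp only [Finset.mem_Icc] at hv
    have hvp : v.natAbs ≤ p := by omega
    apply Finset.card_nbij' (i := fun x => Fin.init x) (j := fun y => Fin.snoc y v)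
    · intro x hx
      simp only [Finset.mem_coe, Finset.mem_filter] at hx ⊢
      obtain ⟨hx1, hx2⟩ := hx
      rw [mem_Bl] at hx1 ⊢
      rw [Fin.sum_univ_castSucc] at hx1
      have : |x (Fin.last k)| = |v| := by rw [hx2]
      push_cast [Nat.cast_sub hvp]
      have habs : |v| = v.natAbs := (Int.abs_eq_natAbs v)
      simp only [Fin.init]
      omega
    · intro y hy
      rw [Finset.mem_coe, mem_Bl] at hy
      simp only [Finset.mem_coe, Finset.mem_filter]
      refine ⟨?_, Fin.snoc_last _ _⟩
      rw [mem_Bl, Fin.sum_univ_castSucc]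
      simp only [Fin.snoc_last, Fin.snoc_castSucc]
      push_cast [Nat.cast_sub hvp] at hy
      have habs : |v| = v.natAbs := Int.abs_eq_natAbs v
      omega
    · intro x hx
      simp only [Finset.mem_coe, Finset.mem_filter] at hx
      rw [← hx.2]
      exact Fin.snoc_init_self x
    · intro y _
      simp
  · intro x hx
    rw [Finset.mem_coe, mem_Bl] at hx
    have : |x (Fin.last k)| ≤ (p : ℤ) :=
      le_trans (Finset.single_le_sum (fun j _ => abs_nonneg (x j)) (Finset.mem_univ _)) hx
    simp only [Finset.mem_coe, Finset.mem_Icc]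
    constructor <;> [linarith [neg_abs_le (x (Fin.last k))]; linarith [le_abs_self (x (Fin.last k))]]

private lemma main_count (k : ℕ) : ∀ p, (Bl k p).card = Dl k p := by
  induction k with
  | zero => intro p; rw [Bl_zero]; simp [Dl]
  | succ n ih =>
    intro p
    rw [N_rec, sum_Icc_abs (fun m => (Bl n m).card) p, D_rec, ih]
    congr 1
    rw [mul_comm, mul_comm 2 _]
    congr 1
    exact Finset.sum_congr rfl fun j _ => ih j

theorem stmt0 (k p : ℕ) (hk : 0 < k) (hp : 0 < p) :
    {x : Fin k → ℤ | ∑ i, |x i| ≤ (p : ℤ)}.ncard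
      = ∑ i ∈ Finset.range (k + 1), 2 ^ i * k.choose i * p.choose i := by
  have hset : {x : Fin k → ℤ | ∑ i, |x i| ≤ (p : ℤ)} = ↑(Bl k p) := by
    ext x; simp [mem_Bl]
  rw [hset, Set.ncard_coe_finset, main_count]
  rfl
end

section
/- The number of lattice points in Z^k within l^1 distance p + 1/2 of the point (1/2, 0, ..., 0) equals the sum over i from 0 to k of 2^i * (C(k,i) + C(k-1,i)) * C(p,i). -/
open Finset

/-! Auxiliary numeric lemmas -/

private lemma sum_range_choose' (p i : ℕ) :
    ∑ t ∈ Finset.range p, t.choose i = p.choose (i + 1) := by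
  induction p with
  | zero => simp
  | succ n ih =>
    rw [Finset.sum_range_succ, ih, Nat.choose_succ_succ n i]
    simp only [Nat.succ_eq_add_one]
    omega

/-- number of lattice points in the l¹ ball of radius `p` in `ℤ^k` -/
private def bb (k p : ℕ) : ℕ := ∑ i ∈ Finset.range (k + 1), 2 ^ i * k.choose i * p.choose i

private lemma two_sum_bb (j p : ℕ) : 2 * ∑ m ∈ Finset.range p, bb j m
    = ∑ i ∈ Finset.range (j + 1), 2 ^ (i + 1) * j.choose i * p.choose (i + 1) := by
  unfold bb
  rw [Finset.sum_comm, Finset.mul_sum]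
  refine Finset.sum_congr rfl fun i _ => ?_
  rw [← Finset.mul_sum, sum_range_choose']
  ring

private lemma bb_succ (j p : ℕ) :
    bb (j + 1) p = bb j p + 2 * ∑ m ∈ Finset.range p, bb j m := by
  rw [two_sum_bb]
  unfold bb
  rw [Finset.sum_range_succ' (fun i => 2 ^ i * (j + 1).choose i * p.choose i) (j + 1)]
  have e1 : ∑ i ∈ Finset.range (j + 1), 2 ^ i * j.choose i * p.choose i
      = 1 + ∑ i ∈ Finset.range (j + 1), 2 ^ (i + 1) * j.choose (i + 1) * p.choose (i + 1) := by
    rw [Finset.sum_range_succ' (fun i => 2 ^ i * j.choose i * p.choose i) j,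
      Finset.sum_range_succ (fun i => 2 ^ (i + 1) * j.choose (i + 1) * p.choose (i + 1)) j]
    simp [Nat.choose_succ_self]
    omega
  rw [e1]
  have e2 : ∑ i ∈ Finset.range (j + 1), 2 ^ (i + 1) * (j + 1).choose (i + 1) * p.choose (i + 1)
      = ∑ i ∈ Finset.range (j + 1),
        (2 ^ (i + 1) * j.choose (i + 1) * p.choose (i + 1)
          + 2 ^ (i + 1) * j.choose i * p.choose (i + 1)) := by
    refine Finset.sum_congr rfl fun i _ => ?_
    rw [Nat.choose_succ_succ j i]
    ring
  rw [e2, Finset.sum_add_distrib]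
  simp
  omega

/-! Sums over integer intervals -/

private lemma sum_Icc_int (f : ℤ → ℕ) (a : ℤ) (n : ℕ) :
    ∑ m ∈ Finset.Icc a (a + n), f m = ∑ t ∈ Finset.range (n + 1), f (a + t) := by
  induction n with
  | zero => simp
  | succ n ih =>
    have hins : Finset.Icc a (a + ((n : ℤ) + 1)) = insert (a + ((n : ℤ) + 1)) (Finset.Icc a (a + n)) := by
      ext m; simp only [Finset.mem_Icc, Finset.mem_insert]; omega
    have hnot : a + ((n : ℤ) + 1) ∉ Finset.Icc a (a + (n : ℤ)) := by
      simp only [Finset.mem_Icc]; omega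
    have hcast : ((n + 1 : ℕ) : ℤ) = (n : ℤ) + 1 := by push_cast; ring
    rw [hcast, hins, Finset.sum_insert hnot, ih]
    conv_rhs => rw [Finset.sum_range_succ]
    rw [hcast]
    exact add_comm _ _
  
private lemma sum_Icc_int' (f : ℤ → ℕ) (a : ℤ) (n : ℕ) :
    ∑ m ∈ Finset.Icc a (a + n - 1), f m = ∑ t ∈ Finset.range n, f (a + t) := by
  cases n with
  | zero =>
    rw [Finset.Icc_eq_empty (by omega)]
    simp
  | succ n =>
    have : a + ((n : ℤ) + 1) - 1 = a + n := by ring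
    push_cast
    rw [this, sum_Icc_int]

private lemma sum_Icc_split (f : ℤ → ℕ) (a b c : ℤ) (h1 : a ≤ b + 1) (h2 : b ≤ c) :
    ∑ m ∈ Finset.Icc a c, f m
      = ∑ m ∈ Finset.Icc a b, f m + ∑ m ∈ Finset.Icc (b + 1) c, f m := by
  rw [← Finset.sum_union (by
    rw [Finset.disjoint_left]
    intro m hm hm'
    simp only [Finset.mem_Icc] at hm hm'
    omega)]
  apply Finset.sum_congr _ fun _ _ => rfl
  ext m
  simp only [Finset.mem_Icc, Finset.mem_union]
  omega

/-! The ball as a Finset -/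

private noncomputable def ballF (k p : ℕ) : Finset (Fin k → ℤ) :=
  (Fintype.piFinset fun _ => Finset.Icc (-(p : ℤ)) p).filter fun x => ∑ i, |x i| ≤ (p : ℤ)

private lemma mem_ballF {k p : ℕ} {x : Fin k → ℤ} :
    x ∈ ballF k p ↔ ∑ i, |x i| ≤ (p : ℤ) := by
  simp only [ballF, Finset.mem_filter, Fintype.mem_piFinset, Finset.mem_Icc]
  refine ⟨fun h => h.2, fun h => ⟨fun i => ?_, h⟩⟩
  have h1 : |x i| ≤ ∑ j, |x j| :=
    Finset.single_le_sum (f := fun j => |x j|) (fun j _ => abs_nonneg _) (Finset.mem_univ i)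
  have h2 := abs_le.mp (h1.trans h)
  exact h2

private lemma card_fiber {j q : ℕ} {m : ℤ} {S : Finset (Fin (j + 1) → ℤ)}
    (h : ∀ x : Fin (j + 1) → ℤ, x 0 = m →
      (x ∈ S ↔ ∑ i : Fin j, |x i.succ| ≤ (q : ℤ))) :
    (S.filter fun x => x 0 = m).card = (ballF j q).card := by
  apply Finset.card_bij (fun x _ => Fin.tail x)
  · intro x hx
    simp only [Finset.mem_filter] at hx
    rw [mem_ballF]
    exact (h x hx.2).mp hx.1
  · intro x hx y hy hxy
    simp only [Finset.mem_filter] at hx hy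
    funext i
    refine Fin.cases ?_ ?_ i
    · rw [hx.2, hy.2]
    · intro i
      exact congrFun hxy i
  · intro y hy
    refine ⟨Fin.cons m y, ?_, ?_⟩
    · simp only [Finset.mem_filter]
      refine ⟨?_, Fin.cons_zero _ _⟩
      rw [h _ (Fin.cons_zero _ _)]
      simpa [Fin.cons_succ] using mem_ballF.mp hy
    · funext i
      simp [Fin.tail, Fin.cons_succ]

private lemma card_ballF (k p : ℕ) : (ballF k p).card = bb k p := by
  induction k generalizing p with
  | zero =>
    have h1 : ballF 0 p = {(default : Fin 0 → ℤ)} := by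
      ext x
      simp only [mem_ballF, Finset.mem_singleton, Finset.univ_eq_empty, Finset.sum_empty]
      constructor
      · intro _; exact Subsingleton.elim _ _
      · intro _; positivity
    rw [h1]
    simp [bb]
  | succ j ih =>
    have H : ∀ x ∈ ballF (j + 1) p, x 0 ∈ Finset.Icc (-(p : ℤ)) p := by
      intro x hx
      rw [mem_ballF] at hx
      have h1 : |x 0| ≤ ∑ i, |x i| :=
        Finset.single_le_sum (f := fun i => |x i|) (fun i _ => abs_nonneg _)
          (Finset.mem_univ (0 : Fin (j + 1)))
      have h2 := abs_le.mp (h1.trans hx)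
      simp only [Finset.mem_Icc]
      exact h2
    rw [Finset.card_eq_sum_card_fiberwise H]
    have hfib : ∀ m ∈ Finset.Icc (-(p : ℤ)) p,
        ((ballF (j + 1) p).filter fun x => x 0 = m).card = bb j (p - m.natAbs) := by
      intro m hm
      simp only [Finset.mem_Icc] at hm
      rw [card_fiber (q := p - m.natAbs) ?_, ih]
      intro x hx0
      rw [mem_ballF, Fin.sum_univ_succ, hx0]
      have hq : ((p - m.natAbs : ℕ) : ℤ) = (p : ℤ) - |m| := by
        rw [Int.abs_eq_natAbs]
        omega
      rw [hq]
      constructor <;> intro h' <;> linarith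
    rw [Finset.sum_congr rfl hfib]
    have e1 : ∑ m ∈ Finset.Icc (-(p : ℤ)) (-1), bb j (p - m.natAbs)
        = ∑ t ∈ Finset.range p, bb j t := by
      have h := sum_Icc_int' (fun m => bb j (p - m.natAbs)) (-(p : ℤ)) p
      rw [show (-(p : ℤ) + p - 1) = -1 by ring] at h
      rw [h]
      refine Finset.sum_congr rfl fun t ht => ?_
      simp only [Finset.mem_range] at ht
      congr 1
      omega
    have e2 : ∑ m ∈ Finset.Icc ((-1 : ℤ) + 1) p, bb j (p - m.natAbs)
        = ∑ t ∈ Finset.range (p + 1), bb j t := by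
      rw [show ((-1 : ℤ) + 1) = 0 by ring,
        show ((p : ℤ)) = 0 + (p : ℤ) from (zero_add _).symm,
        sum_Icc_int (fun m => bb j (p - m.natAbs)) 0 p,
        ← Finset.sum_range_reflect (fun t => bb j t) (p + 1)]
      refine Finset.sum_congr rfl fun t ht => ?_
      simp only [Finset.mem_range] at ht
      congr 1
      omega
    rw [sum_Icc_split _ (-(p : ℤ)) (-1) p (by omega) (by omega), e1, e2, bb_succ,
      Finset.sum_range_succ]
    ring

/-! The odd ball as a Finset -/

private noncomputable def oddF (j p : ℕ) : Finset (Fin (j + 1) → ℤ) :=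
  (Fintype.piFinset fun _ => Finset.Icc (-(p : ℤ)) ((p : ℤ) + 1)).filter
    fun x => |2 * x 0 - 1| + ∑ i : Fin j, 2 * |x i.succ| ≤ 2 * (p : ℤ) + 1

private lemma mem_oddF {j p : ℕ} {x : Fin (j + 1) → ℤ} :
    x ∈ oddF j p ↔ |2 * x 0 - 1| + ∑ i : Fin j, 2 * |x i.succ| ≤ 2 * (p : ℤ) + 1 := by
  simp only [oddF, Finset.mem_filter, Fintype.mem_piFinset, Finset.mem_Icc]
  refine ⟨fun h => h.2, fun h => ⟨fun i => ?_, h⟩⟩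
  have hone : (1 : ℤ) ≤ |2 * x 0 - 1| := by
    rcases abs_cases (2 * x 0 - 1) with ⟨he, _⟩ | ⟨he, _⟩ <;> omega
  have hsn : (0 : ℤ) ≤ ∑ i : Fin j, 2 * |x i.succ| :=
    Finset.sum_nonneg fun i _ => by positivity
  refine Fin.cases ?_ ?_ i
  · have h0 := abs_le.mp (show |2 * x 0 - 1| ≤ 2 * (p : ℤ) + 1 by linarith)
    omega
  · intro i
    have h1 : 2 * |x i.succ| ≤ ∑ i' : Fin j, 2 * |x i'.succ| :=
      Finset.single_le_sum (f := fun i' : Fin j => 2 * |x i'.succ|)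
        (fun i' _ => by positivity) (Finset.mem_univ i)
    have h2 : |x i.succ| ≤ (p : ℤ) := by linarith
    have h3 := abs_le.mp h2
    omega

private lemma card_oddF (j p : ℕ) :
    (oddF j p).card = 2 * ∑ t ∈ Finset.range (p + 1), bb j t := by
  have H : ∀ x ∈ oddF j p, x 0 ∈ Finset.Icc (-(p : ℤ)) ((p : ℤ) + 1) := by
    intro x hx
    rw [mem_oddF] at hx
    have hsn : (0 : ℤ) ≤ ∑ i : Fin j, 2 * |x i.succ| :=
      Finset.sum_nonneg fun i _ => by positivity
    have h0 := abs_le.mp (show |2 * x 0 - 1| ≤ 2 * (p : ℤ) + 1 by linarith)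
    simp only [Finset.mem_Icc]
    omega
  rw [Finset.card_eq_sum_card_fiberwise H]
  have hfib1 : ∀ m ∈ Finset.Icc (-(p : ℤ)) 0,
      ((oddF j p).filter fun x => x 0 = m).card = bb j ((p + m).toNat) := by
    intro m hm
    simp only [Finset.mem_Icc] at hm
    rw [card_fiber (q := ((p : ℤ) + m).toNat) ?_, card_ballF]
    intro x hx0
    rw [mem_oddF, hx0]
    have ha : |2 * m - 1| = 1 - 2 * m := by
      rw [abs_of_nonpos (by omega)]; ring
    have hc : ((((p : ℤ) + m).toNat : ℕ) : ℤ) = (p : ℤ) + m := Int.toNat_of_nonneg (by omega)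
    rw [ha, hc, show (∑ i : Fin j, 2 * |x i.succ|) = 2 * ∑ i : Fin j, |x i.succ| from
      (Finset.mul_sum _ _ _).symm]
    constructor <;> intro h' <;> linarith
  have hfib2 : ∀ m ∈ Finset.Icc (1 : ℤ) ((p : ℤ) + 1),
      ((oddF j p).filter fun x => x 0 = m).card = bb j (((p : ℤ) + 1 - m).toNat) := by
    intro m hm
    simp only [Finset.mem_Icc] at hm
    rw [card_fiber (q := ((p : ℤ) + 1 - m).toNat) ?_, card_ballF]
    intro x hx0
    rw [mem_oddF, hx0]
    have ha : |2 * m - 1| = 2 * m - 1 := abs_of_nonneg (by omega)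
    have hc : ((((p : ℤ) + 1 - m).toNat : ℕ) : ℤ) = (p : ℤ) + 1 - m :=
      Int.toNat_of_nonneg (by omega)
    rw [ha, hc, show (∑ i : Fin j, 2 * |x i.succ|) = 2 * ∑ i : Fin j, |x i.succ| from
      (Finset.mul_sum _ _ _).symm]
    constructor <;> intro h' <;> linarith
  rw [sum_Icc_split _ (-(p : ℤ)) 0 ((p : ℤ) + 1) (by omega) (by omega)]
  rw [Finset.sum_congr rfl hfib1, Finset.sum_congr rfl (fun m hm => hfib2 m (by
    simpa using hm))]
  have e1 : ∑ m ∈ Finset.Icc (-(p : ℤ)) 0, bb j ((p + m).toNat)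
      = ∑ t ∈ Finset.range (p + 1), bb j t := by
    have h := sum_Icc_int (fun m => bb j (((p : ℤ) + m).toNat)) (-(p : ℤ)) p
    rw [show (-(p : ℤ) + p) = 0 by ring] at h
    rw [h]
    refine Finset.sum_congr rfl fun t ht => ?_
    simp only [Finset.mem_range] at ht
    congr 1
    omega
  have e2 : ∑ m ∈ Finset.Icc ((0 : ℤ) + 1) ((p : ℤ) + 1), bb j (((p : ℤ) + 1 - m).toNat)
      = ∑ t ∈ Finset.range (p + 1), bb j t := by
    rw [show ((0 : ℤ) + 1) = 1 by ring,
      show ((p : ℤ) + 1) = 1 + (p : ℤ) from add_comm _ _,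
      sum_Icc_int (fun m => bb j ((1 + (p : ℤ) - m).toNat)) 1 p,
      ← Finset.sum_range_reflect (fun t => bb j t) (p + 1)]
    refine Finset.sum_congr rfl fun t ht => ?_
    simp only [Finset.mem_range] at ht
    congr 1
    omega
  rw [e1, e2]
  ring

theorem stmt1 (k p : ℕ) (hk : 1 ≤ k) :
    {x : Fin k → ℤ |
        |2 * x ⟨0, hk⟩ - 1| + ∑ i ∈ Finset.univ.erase ⟨0, hk⟩, 2 * |x i| ≤ 2 * (p : ℤ) + 1}.ncard
      = ∑ i ∈ Finset.range (k + 1), 2 ^ i * (k.choose i + (k - 1).choose i) * p.choose i := by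
  obtain ⟨j, rfl⟩ : ∃ j, k = j + 1 := ⟨k - 1, by omega⟩
  have hset : {x : Fin (j + 1) → ℤ |
      |2 * x ⟨0, hk⟩ - 1| + ∑ i ∈ Finset.univ.erase ⟨0, hk⟩, 2 * |x i| ≤ 2 * (p : ℤ) + 1}
      = ↑(oddF j p) := by
    ext x
    have h0 : (⟨0, hk⟩ : Fin (j + 1)) = 0 := rfl
    have hsum : ∑ i ∈ Finset.univ.erase (0 : Fin (j + 1)), 2 * |x i|
        = ∑ i : Fin j, 2 * |x i.succ| := by
      have h1 := Finset.add_sum_erase Finset.univ (fun i => 2 * |x i|)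
        (Finset.mem_univ (0 : Fin (j + 1)))
      have h2 : ∑ i : Fin (j + 1), 2 * |x i| = 2 * |x 0| + ∑ i : Fin j, 2 * |x i.succ| :=
        Fin.sum_univ_succ _
      linarith [h1, h2]
    simp only [Set.mem_setOf_eq, Finset.mem_coe, mem_oddF, hsum, h0]
  rw [hset, Set.ncard_coe_finset, card_oddF]
  have hrhs : ∑ i ∈ Finset.range (j + 1 + 1),
      2 ^ i * ((j + 1).choose i + (j + 1 - 1).choose i) * p.choose i
      = bb (j + 1) p + bb j p := by
    simp only [Nat.add_sub_cancel]
    have e : ∀ i, 2 ^ i * ((j + 1).choose i + j.choose i) * p.choose i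
        = 2 ^ i * (j + 1).choose i * p.choose i + 2 ^ i * j.choose i * p.choose i := by
      intro i; ring
    rw [Finset.sum_congr rfl fun i _ => e i, Finset.sum_add_distrib]
    congr 1
    unfold bb
    rw [Finset.sum_range_succ]
    simp [Nat.choose_succ_self]
  rw [hrhs, bb_succ, Finset.sum_range_succ]
  ring
end

section
/- A path with n vertices has diameter n-1, and a cycle with 2D vertices has diameter D; consequently, the largest connected subgraph of the k-dimensional mesh (k >= 2) with maximum degree at most 2 and diameter at most 2p has exactly 4p vertices, and with diameter at most 2p+1 has exactly 4p+2 vertices. -/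
open SimpleGraph Finset Filter Asymptotics

/-- The `k`-dimensional mesh: graph on `ℤ^k` with edges between points at `ℓ¹` distance 1. -/
def mesh (k : ℕ) : SimpleGraph (Fin k → ℤ) :=
  SimpleGraph.fromRel (fun x y => ∑ i, |x i - y i| = 1)

namespace Aux


lemma potential_walk {V : Type*} {G : SimpleGraph V} (f : V → ℤ)
    (hf : ∀ ⦃u v⦄, G.Adj u v → |f u - f v| ≤ 1) {u v : V} (w : G.Walk u v) :
    |f u - f v| ≤ (w.length : ℤ) := by
  induction w with
  | nil => simp
  | @cons a b c h q ih =>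
      calc |f a - f c| ≤ |f a - f b| + |f b - f c| := abs_sub_le _ _ _
      _ ≤ 1 + q.length := add_le_add (hf h) ih
      _ = ((q.length + 1 : ℕ) : ℤ) := by push_cast; ring
      _ = _ := by rw [SimpleGraph.Walk.length_cons]

lemma potential_dist {V : Type*} {G : SimpleGraph V} (f : V → ℤ)
    (hf : ∀ ⦃u v⦄, G.Adj u v → |f u - f v| ≤ 1) {u v : V} (hr : G.Reachable u v) :
    |f u - f v| ≤ (G.dist u v : ℤ) := by
  obtain ⟨w, hw⟩ := hr.exists_walk_length_eq_dist
  simpa [hw] using potential_walk f hf w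

lemma path_walk {n : ℕ} : ∀ (j : ℕ) (a b : Fin (n+1)), (b : ℕ) = a + j →
    ∃ w : (pathGraph (n+1)).Walk a b, w.length = j := by
  intro j
  induction j with
  | zero => intro a b h; obtain rfl : a = b := Fin.ext (by omega); exact ⟨.nil, rfl⟩
  | succ j ih =>
      intro a b h
      have ha : (a : ℕ) + 1 < n + 1 := by have := b.isLt; omega
      set a' : Fin (n+1) := ⟨a + 1, ha⟩ with ha'
      have hadj : (pathGraph (n+1)).Adj a a' := by
        rw [pathGraph_adj]; left; rfl
      obtain ⟨w, hw⟩ := ih a' b (by simp [ha']; omega)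
      exact ⟨.cons hadj w, by simp [hw]⟩

lemma path_edist {n : ℕ} (u v : Fin (n+1)) : (pathGraph (n+1)).edist u v ≤ (n : ℕ∞) := by
  rcases le_total (u : ℕ) (v : ℕ) with h | h
  · obtain ⟨w, hw⟩ := path_walk ((v : ℕ) - u) u v (by omega)
    refine le_trans (SimpleGraph.Walk.edist_le w) ?_
    rw [hw]; exact Nat.cast_le.mpr (by omega)
  · obtain ⟨w, hw⟩ := path_walk ((u : ℕ) - v) v u (by omega)
    rw [SimpleGraph.edist_comm]
    refine le_trans (SimpleGraph.Walk.edist_le w) ?_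
    rw [hw]; exact Nat.cast_le.mpr (by omega)

lemma path_diam (n : ℕ) (hn : 1 ≤ n) : (pathGraph n).diam = n - 1 := by
  obtain ⟨m, rfl⟩ := Nat.exists_eq_add_of_le hn
  rw [Nat.add_comm 1 m]
  have hub : (pathGraph (m+1)).ediam ≤ (m : ℕ∞) :=
    SimpleGraph.ediam_le_of_edist_le fun u v => path_edist u v
  have hne : (pathGraph (m+1)).ediam ≠ ⊤ := by
    intro h; rw [h] at hub; exact (by simp : ¬ (⊤ : ℕ∞) ≤ (m : ℕ∞)) hub
  have hlow : m ≤ (pathGraph (m+1)).dist ⟨0, by omega⟩ ⟨m, by omega⟩ := by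
    have hpot := potential_dist (G := pathGraph (m+1)) (fun x => (x : ℤ))
      (fun u v h => by
        rw [pathGraph_adj] at h
        rcases h with h | h <;> · simp only [abs_le]; omega)
      ((pathGraph_connected m).preconnected ⟨0, by omega⟩ ⟨m, by omega⟩)
    simp only at hpot
    have : (m : ℤ) ≤ ((pathGraph (m+1)).dist ⟨0, by omega⟩ ⟨m, by omega⟩ : ℤ) := by
      simpa using hpot
    exact_mod_cast this
  have h1 : (pathGraph (m+1)).diam ≤ m := by
    have := ENat.toNat_le_toNat hub (by simp)
    simpa [SimpleGraph.diam] using this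
  have h2 : m ≤ (pathGraph (m+1)).diam :=
    le_trans hlow (SimpleGraph.dist_le_diam hne)
  simp [le_antisymm h1 h2]

lemma fin_val_one {n : ℕ} [NeZero n] (hn : 2 ≤ n) : ((1 : Fin n) : ℕ) = 1 := by
  rw [Fin.val_one']; exact Nat.mod_eq_of_lt hn

lemma fin_eq_zero_of_val {n : ℕ} [NeZero n] {x : Fin n} (h : (x:ℕ) = 0) : x = 0 :=
  Fin.ext (by rw [h]; simp)

lemma fin_sub_one_val {n : ℕ} [NeZero n] (hn : 2 ≤ n) (x : Fin n) (hx : x ≠ 0) :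
    ((x - 1 : Fin n) : ℕ) = (x : ℕ) - 1 := by
  have h1 : x = (x - 1) + 1 := by abel
  have h2 : (x : ℕ) = (((x - 1 : Fin n) : ℕ) + 1) % n := by
    conv_lhs => rw [h1]
    rw [Fin.val_add, fin_val_one hn]
  have h3 := (x - 1).isLt
  rcases Nat.lt_or_ge (((x - 1 : Fin n) : ℕ) + 1) n with hlt | hge
  · rw [Nat.mod_eq_of_lt hlt] at h2; omega
  · have h4 : ((x - 1 : Fin n) : ℕ) + 1 = n := by omega
    rw [h4, Nat.mod_self] at h2
    exact absurd (fin_eq_zero_of_val h2) hx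

lemma cycle_adj_succ {n : ℕ} [NeZero n] (hn : 2 ≤ n) (u : Fin n) :
    (cycleGraph n).Adj u (u + 1) := by
  rw [cycleGraph_adj']
  right
  rw [add_sub_cancel_left, fin_val_one hn]

lemma cycle_walk {n : ℕ} [NeZero n] (hn : 2 ≤ n) : ∀ (j : ℕ) (u v : Fin n),
    ((v - u : Fin n) : ℕ) = j → ∃ w : (cycleGraph n).Walk u v, w.length = j := by
  intro j
  induction j with
  | zero =>
      intro u v h
      obtain rfl : u = v := (sub_eq_zero.mp (fin_eq_zero_of_val h)).symm
      exact ⟨.nil, rfl⟩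
  | succ j ih =>
      intro u v h
      have hne : v - u ≠ 0 := by
        intro h0; rw [h0] at h; simp at h
      have hval : ((v - (u + 1) : Fin n) : ℕ) = j := by
        have heq : v - (u + 1) = (v - u) - 1 := by abel
        rw [heq, fin_sub_one_val hn _ hne, h]; omega
      obtain ⟨w, hw⟩ := ih (u + 1) v hval
      exact ⟨.cons (cycle_adj_succ hn u) w, by simp [hw]⟩

lemma fin_val_neg {n : ℕ} [NeZero n] (x : Fin n) (hx : x ≠ 0) :
    ((-x : Fin n) : ℕ) = n - (x : ℕ) := by
  have h1 : ((x + -x : Fin n) : ℕ) = 0 := by simp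
  rw [Fin.val_add] at h1
  have hxv : 0 < (x:ℕ) := by
    rcases Nat.eq_zero_or_pos (x:ℕ) with h | h
    · exact absurd (fin_eq_zero_of_val h) hx
    · exact h
  have hlt1 := x.isLt
  have hlt2 := (-x).isLt
  obtain ⟨c, hc⟩ := Nat.dvd_of_mod_eq_zero h1
  match c with
  | 0 => omega
  | 1 => omega
  | (c+2) =>
      exfalso
      have : 2 * n ≤ n * (c + 2) := by nlinarith
      omega

lemma cycle_short_walk {D : ℕ} (hD : 1 ≤ D) (u v : Fin (2*D)) :
    ∃ w : (cycleGraph (2*D)).Walk u v, w.length ≤ D := by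
  have hn : 2 ≤ 2*D := by omega
  haveI : NeZero (2*D) := ⟨by omega⟩
  by_cases huv : u = v
  · subst huv; exact ⟨.nil, by simp⟩
  have h1 : v - u ≠ 0 := fun h => huv (sub_eq_zero.mp h).symm
  have hneg : (u - v) = -(v - u) := by abel
  have hpos : 0 < ((v - u : Fin (2*D)) : ℕ) := by
    rcases Nat.eq_zero_or_pos _ with h | h
    · exact absurd (fin_eq_zero_of_val h) h1
    · exact h
  have hsum : ((v - u : Fin (2*D)) : ℕ) + ((u - v : Fin (2*D)) : ℕ) = 2*D := by
    rw [hneg, fin_val_neg _ h1]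
    have := (v - u).isLt
    omega
  obtain ⟨w1, hw1⟩ := cycle_walk hn _ u v rfl
  obtain ⟨w2, hw2⟩ := cycle_walk hn _ v u rfl
  rcases le_or_gt ((v - u : Fin (2*D)) : ℕ) D with h | h
  · exact ⟨w1, by omega⟩
  · exact ⟨w2.reverse, by rw [SimpleGraph.Walk.length_reverse]; omega⟩

lemma cycle_diam (D : ℕ) (hD : 1 ≤ D) : (cycleGraph (2*D)).diam = D := by
  have hn : 2 ≤ 2*D := by omega
  haveI : NeZero (2*D) := ⟨by omega⟩
  have hub : (cycleGraph (2*D)).ediam ≤ (D : ℕ∞) := by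
    apply SimpleGraph.ediam_le_of_edist_le
    intro u v
    obtain ⟨w, hw⟩ := cycle_short_walk hD u v
    exact le_trans (SimpleGraph.Walk.edist_le w) (Nat.cast_le.mpr hw)
  have hne : (cycleGraph (2*D)).ediam ≠ ⊤ := by
    intro h; rw [h] at hub; exact (by simp : ¬ (⊤ : ℕ∞) ≤ (D : ℕ∞)) hub
  set u0 : Fin (2*D) := ⟨0, by omega⟩ with hu0def
  set v0 : Fin (2*D) := ⟨D, by omega⟩ with hv0def
  have hlow : D ≤ (cycleGraph (2*D)).dist u0 v0 := by
    have hpot := potential_dist (G := cycleGraph (2*D))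
      (fun x => min ((x : ℕ) : ℤ) ((2*D : ℕ) - (x:ℕ)))
      (fun u v h => by
        rw [cycleGraph_adj'] at h
        have hu := u.isLt; have hv := v.isLt
        have key : ∀ a b : Fin (2*D), b = a + 1 →
            |min ((a : ℕ) : ℤ) ((2*D : ℕ) - (a:ℕ)) - min ((b : ℕ) : ℤ) ((2*D : ℕ) - (b:ℕ))| ≤ 1 := by
          intro a b hb
          subst hb
          have hval : ((a + 1 : Fin (2*D)) : ℕ) = ((a : ℕ) + 1) % (2*D) := by
            rw [Fin.val_add, fin_val_one hn]
          have ha := a.isLt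
          rcases Nat.lt_or_ge ((a:ℕ) + 1) (2*D) with hlt | hge
          · rw [Nat.mod_eq_of_lt hlt] at hval
            rw [abs_le, hval]; constructor <;> [skip; skip] <;> push_cast <;> omega
          · have ha2 : (a:ℕ) + 1 = 2*D := by omega
            rw [ha2, Nat.mod_self] at hval
            rw [abs_le, hval]; constructor <;> push_cast <;> omega
        rcases h with h | h
        · -- (u - v).val = 1 : u = v + 1
          have : u = v + 1 := by
            have h2 : u - v = 1 := Fin.ext (by rw [h, fin_val_one hn])
            rw [← h2]; abel
          rw [abs_sub_comm]
          exact key v u this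
        · have : v = u + 1 := by
            have h2 : v - u = 1 := Fin.ext (by rw [h, fin_val_one hn])
            rw [← h2]; abel
          exact key u v this)
      (cycle_short_walk hD u0 v0).choose.reachable
    have hv0 : ((v0 : ℕ) : ℤ) = D := by simp [hv0def]
    have hu0 : ((u0 : ℕ) : ℤ) = 0 := by simp [hu0def]
    rw [hu0, hv0] at hpot
    have habs : |min (0:ℤ) ((2*D : ℕ) - ((u0:ℕ):ℤ)) - min ((D:ℕ):ℤ) ((2*D : ℕ) - ((v0:ℕ):ℤ))| = D := by
      rw [hu0, hv0]; rw [abs_sub_comm]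
      have h1 : min (0:ℤ) ((2*D : ℕ) - 0) = 0 := by push_cast; omega
      have h2 : min ((D:ℕ):ℤ) ((2*D : ℕ) - (D:ℤ)) = D := by push_cast; omega
      rw [h1, h2]; simp
    rw [hu0, hv0] at habs
    rw [habs] at hpot
    exact_mod_cast hpot
  have h1 : (cycleGraph (2*D)).diam ≤ D := by
    have := ENat.toNat_le_toNat hub (by simp)
    simpa [SimpleGraph.diam] using this
  exact le_antisymm h1 (le_trans hlow (SimpleGraph.dist_le_diam hne))



-- neighbor at smaller distance
lemma exists_adj_dist {V : Type*} {G : SimpleGraph V} {r v : V} {d : ℕ}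
    (hr : G.Reachable r v) (h : G.dist r v = d + 1) :
    ∃ u, G.Adj u v ∧ G.dist r u = d := by
  obtain ⟨w, hw⟩ := hr.exists_walk_length_eq_dist
  rw [h] at hw
  have hplen : w.reverse.length = d + 1 := by rw [SimpleGraph.Walk.length_reverse, hw]
  cases hrev : w.reverse with
  | nil => rw [hrev] at hplen; simp at hplen
  | @cons _ b _ hadj q =>
      refine ⟨b, hadj.symm, ?_⟩
      rw [hrev] at hplen
      have hq : q.length = d := by simpa using hplen
      have hle : G.dist r b ≤ d := by
        have := SimpleGraph.dist_le q.reverse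
        rwa [SimpleGraph.Walk.length_reverse, hq] at this
      rcases Nat.lt_or_ge (G.dist r b) d with hlt | hge
      · exfalso
        obtain ⟨w2, hw2⟩ := (q.reverse.reachable).exists_walk_length_eq_dist
        have : G.dist r v ≤ G.dist r b + 1 := by
          have := SimpleGraph.dist_le (w2.concat hadj.symm)
          rwa [SimpleGraph.Walk.length_concat, hw2] at this
        omega
      · omega

variable {V : Type*} [Fintype V] [DecidableEq V] (G : SimpleGraph V) [DecidableRel G.Adj]

/-- sphere cardinality is non-increasing (from radius 1 on) for max degree 2 -/
lemma sphere_mono (hc : G.Connected) (hdeg : ∀ v, G.degree v ≤ 2) (r : V) (d : ℕ) :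
    (univ.filter (fun v => G.dist r v = d + 2)).card
      ≤ (univ.filter (fun v => G.dist r v = d + 1)).card := by
  set S1 := univ.filter (fun v => G.dist r v = d + 1) with hS1
  set S2 := univ.filter (fun v => G.dist r v = d + 2) with hS2
  have hsub : S2 ⊆ S1.biUnion (fun u => (G.neighborFinset u).filter (fun v => G.dist r v = d + 2)) := by
    intro v hv
    rw [hS2, mem_filter] at hv
    obtain ⟨u, hadj, hu⟩ := exists_adj_dist (hc.preconnected r v) hv.2
    rw [mem_biUnion]
    exact ⟨u, by simp [hS1, hu], by simp [hadj, hv.2]⟩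
  refine le_trans (le_trans (card_le_card hsub) (card_biUnion_le)) ?_
  have hbound : ∀ u ∈ S1, ((G.neighborFinset u).filter (fun v => G.dist r v = d + 2)).card ≤ 1 := by
    intro u hu
    rw [hS1, mem_filter] at hu
    obtain ⟨w, hadj, hw⟩ := exists_adj_dist (hc.preconnected r u) hu.2
    have hwmem : w ∈ G.neighborFinset u := by simp [hadj.symm]
    have hwnot : w ∉ (G.neighborFinset u).filter (fun v => G.dist r v = d + 2) := by
      simp only [mem_filter]; rintro ⟨-, h2⟩; omega
    have hsub2 : (G.neighborFinset u).filter (fun v => G.dist r v = d + 2)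
        ⊆ (G.neighborFinset u).erase w := by
      intro x hx
      rw [mem_erase]
      exact ⟨fun h => hwnot (h ▸ hx), (mem_filter.mp hx).1⟩
    calc ((G.neighborFinset u).filter (fun v => G.dist r v = d + 2)).card
        ≤ ((G.neighborFinset u).erase w).card := card_le_card hsub2
      _ = (G.neighborFinset u).card - 1 := card_erase_of_mem hwmem
      _ ≤ 1 := by have := hdeg u; rw [← card_neighborFinset_eq_degree] at this; omega
  calc ∑ u ∈ S1, ((G.neighborFinset u).filter (fun v => G.dist r v = d + 2)).card
      ≤ ∑ _u ∈ S1, 1 := sum_le_sum hbound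
    _ = S1.card := by simp

lemma sphere_le_deg (hc : G.Connected) (hdeg : ∀ v, G.degree v ≤ 2) (r : V) (d : ℕ) :
    (univ.filter (fun v => G.dist r v = d + 1)).card ≤ G.degree r := by
  induction d with
  | zero =>
      have : univ.filter (fun v => G.dist r v = 1) = G.neighborFinset r := by
        ext v; simp [SimpleGraph.dist_eq_one_iff_adj]
      rw [this, card_neighborFinset_eq_degree]
  | succ d ih => exact le_trans (sphere_mono G hc hdeg r d) ih

lemma card_le_root (hc : G.Connected) (hdeg : ∀ v, G.degree v ≤ 2) (r : V) (R : ℕ)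
    (hdist : ∀ v, G.dist r v ≤ R) :
    Fintype.card V ≤ 1 + R * G.degree r := by
  have hpart : (univ : Finset V) = (Finset.range (R+1)).biUnion
      (fun d => univ.filter (fun v => G.dist r v = d)) := by
    ext v
    simp only [mem_univ, true_iff, mem_biUnion, mem_range, mem_filter]
    exact ⟨G.dist r v, by have := hdist v; omega, trivial, rfl⟩
  have hdisj : ∀ x ∈ Finset.range (R+1), ∀ y ∈ Finset.range (R+1), x ≠ y →
      Disjoint (univ.filter (fun v => G.dist r v = x)) (univ.filter (fun v => G.dist r v = y)) := by
    intro x _ y _ hxy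
    rw [Finset.disjoint_left]
    intro a ha hb
    rw [mem_filter] at ha hb
    exact hxy (ha.2 ▸ hb.2 ▸ rfl)
  have hcard : Fintype.card V = ∑ d ∈ Finset.range (R+1),
      (univ.filter (fun v => G.dist r v = d)).card := by
    rw [← card_biUnion hdisj, ← hpart, card_univ]
  rw [hcard, Finset.sum_range_succ']
  have h0 : (univ.filter (fun v => G.dist r v = 0)).card = 1 := by
    have : univ.filter (fun v => G.dist r v = 0) = {r} := by
      ext v; simp [hc.dist_eq_zero_iff, eq_comm]
    rw [this, card_singleton]
  rw [h0]
  have : ∑ d ∈ Finset.range R, (univ.filter (fun v => G.dist r v = d + 1)).card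
      ≤ ∑ _d ∈ Finset.range R, G.degree r :=
    sum_le_sum (fun d _ => sphere_le_deg G hc hdeg r d)
  simp only [sum_const, card_range, smul_eq_mul] at this
  omega

lemma even_card_of_two_regular (hreg : ∀ v, G.degree v = 2) (f : V → ZMod 2)
    (hf : ∀ ⦃u v⦄, G.Adj u v → f u ≠ f v) : Even (Fintype.card V) := by
  classical
  set A := univ.filter (fun v => f v = 0) with hA
  have hdisj : ∀ x ∈ A, ∀ y ∈ A, x ≠ y → Disjoint (G.incidenceFinset x) (G.incidenceFinset y) := by
    intro x hx y hy hxy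
    rw [Finset.disjoint_left]
    intro e he he'
    rw [mem_incidenceFinset] at he he'
    obtain ⟨he1, hxe⟩ := he
    obtain ⟨-, hye⟩ := he'
    have : e = s(x, y) := ((Sym2.mem_and_mem_iff hxy).mp ⟨hxe, hye⟩)
    rw [this, SimpleGraph.mem_edgeSet] at he1
    have := hf he1
    rw [hA, mem_filter] at hx hy
    exact this (hx.2.trans hy.2.symm)
  have hcover : A.biUnion (fun v => G.incidenceFinset v) = G.edgeFinset := by
    ext e
    simp only [mem_biUnion]
    constructor
    · rintro ⟨v, -, he⟩
      rw [mem_incidenceFinset] at he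
      rw [SimpleGraph.mem_edgeFinset]
      exact he.1
    · intro he
      induction e with
      | _ a b =>
        rw [SimpleGraph.mem_edgeFinset, SimpleGraph.mem_edgeSet] at he
        have hab := hf he
        rcases (by decide : ∀ x y : ZMod 2, x ≠ y → x = 0 ∨ y = 0) _ _ hab with h | h
        · exact ⟨a, by simp [hA, h], by rw [mem_incidenceFinset]; exact ⟨he, Sym2.mem_mk_left a b⟩⟩
        · exact ⟨b, by simp [hA, h], by rw [mem_incidenceFinset]; exact ⟨he, Sym2.mem_mk_right a b⟩⟩
  have h1 : ∑ v ∈ A, (G.incidenceFinset v).card = G.edgeFinset.card := by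
    rw [← card_biUnion hdisj, hcover]
  have h2 : ∀ v ∈ A, (G.incidenceFinset v).card = 2 := by
    intro v _; rw [G.card_incidenceFinset_eq_degree, hreg]
  rw [sum_congr rfl h2, sum_const, smul_eq_mul] at h1
  have h3 := G.sum_degrees_eq_twice_card_edges
  simp only [hreg, sum_const, card_univ, smul_eq_mul] at h3
  exact ⟨A.card, by omega⟩

lemma main_upper (hc : G.Connected) (hdegn : ∀ v, (G.neighborSet v).ncard ≤ 2) (f : V → ZMod 2)
    (hf : ∀ ⦃u v⦄, G.Adj u v → f u ≠ f v) (R : ℕ) (hR : 1 ≤ R)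
    (hdist : ∀ u v, G.dist u v ≤ R) : Fintype.card V ≤ 2 * R := by
  have hdeg : ∀ v, G.degree v ≤ 2 := fun v => by
    rw [← SimpleGraph.card_neighborSet_eq_degree, ← Nat.card_eq_fintype_card,
      Nat.card_coe_set_eq]
    exact hdegn v
  by_contra hcon
  push_neg at hcon
  have hne : Nonempty V := hc.nonempty
  obtain ⟨r⟩ := hne
  have hub := card_le_root G hc hdeg r R (hdist r)
  have hcard : Fintype.card V = 2 * R + 1 := by
    have h1 := hdeg r
    have h2 : R * G.degree r ≤ R * 2 := Nat.mul_le_mul_left R h1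
    omega
  have hreg : ∀ v, G.degree v = 2 := by
    intro v
    rcases Nat.lt_or_ge (G.degree v) 2 with h | h
    · exfalso
      have := card_le_root G hc hdeg v R (hdist v)
      have h3 : G.degree v ≤ 1 := by omega
      have h2 : R * G.degree v ≤ R * 1 := Nat.mul_le_mul_left R h3
      rw [Nat.mul_one] at h2
      omega
    · exact le_antisymm (hdeg v) h
  have := even_card_of_two_regular G hreg f hf
  rw [hcard] at this
  obtain ⟨t, ht⟩ := this
  omega




lemma mesh_adj {k : ℕ} {x y : Fin k → ℤ} :
    (mesh k).Adj x y ↔ ∑ i, |x i - y i| = 1 := by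
  unfold mesh
  rw [SimpleGraph.fromRel_adj]
  constructor
  · rintro ⟨hne, h | h⟩
    · exact h
    · rw [show ∑ i, |x i - y i| = ∑ i, |y i - x i| from
        Finset.sum_congr rfl (fun i _ => abs_sub_comm _ _)]
      exact h
  · intro h
    refine ⟨?_, Or.inl h⟩
    rintro rfl
    simp at h

def pt (k : ℕ) (a b : ℤ) : Fin k → ℤ :=
  fun i => if (i : ℕ) = 0 then a else if (i : ℕ) = 1 then b else 0

lemma pt_apply_zero (k : ℕ) (h0 : 0 < k) (a b : ℤ) : pt k a b ⟨0, h0⟩ = a := by simp [pt]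

lemma pt_apply_one (k : ℕ) (h1 : 1 < k) (a b : ℤ) : pt k a b ⟨1, h1⟩ = b := by simp [pt]

lemma sum_pt {k : ℕ} (hk : 2 ≤ k) (a b a' b' : ℤ) :
    ∑ i, |pt k a b i - pt k a' b' i| = |a - a'| + |b - b'| := by
  have h0 : (0:ℕ) < k := by omega
  have h1 : (1:ℕ) < k := by omega
  have hne : (⟨0, h0⟩ : Fin k) ≠ ⟨1, h1⟩ := by
    intro h; exact absurd (congrArg Fin.val h) (by simp)
  have hfun : ∀ i : Fin k, |pt k a b i - pt k a' b' i| =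
      (if i = ⟨0, h0⟩ then |a - a'| else 0) + (if i = ⟨1, h1⟩ then |b - b'| else 0) := by
    intro i
    by_cases hi0 : (i:ℕ) = 0
    · obtain rfl : i = ⟨0, h0⟩ := Fin.ext hi0
      rw [pt_apply_zero, pt_apply_zero, if_pos rfl, if_neg hne, add_zero]
    · by_cases hi1 : (i:ℕ) = 1
      · obtain rfl : i = ⟨1, h1⟩ := Fin.ext hi1
        rw [pt_apply_one, pt_apply_one, if_neg (Ne.symm hne), if_pos rfl, zero_add]
      · have hp : pt k a b i = 0 := by simp [pt, hi0, hi1]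
        have hp' : pt k a' b' i = 0 := by simp [pt, hi0, hi1]
        rw [hp, hp', if_neg, if_neg, sub_zero, abs_zero, add_zero]
        · intro h; exact hi1 (by rw [h])
        · intro h; exact hi0 (by rw [h])
  rw [Finset.sum_congr rfl (fun i _ => hfun i), Finset.sum_add_distrib,
    Finset.sum_ite_eq' univ, Finset.sum_ite_eq' univ, if_pos (mem_univ _), if_pos (mem_univ _)]


variable {k m : ℕ}

def cpt (k m : ℕ) (t : Fin (2*m)) : Fin k → ℤ :=
  if (t:ℕ) < m then pt k ((t:ℕ):ℤ) 0 else pt k (((2*m - 1 - (t:ℕ) : ℕ)):ℤ) 1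

lemma cpt_inj (hk : 2 ≤ k) (hm : 2 ≤ m) : Function.Injective (cpt k m) := by
  have h0 : (0:ℕ) < k := by omega
  have h1 : (1:ℕ) < k := by omega
  intro s t h
  have ha := congrFun h ⟨0, h0⟩
  have hb := congrFun h ⟨1, h1⟩
  have hs := s.isLt
  have ht := t.isLt
  unfold cpt at ha hb
  by_cases hsm : (s:ℕ) < m <;> by_cases htm : (t:ℕ) < m <;>
    simp only [if_pos, if_neg, hsm, htm, if_true, if_false,
      pt_apply_zero, pt_apply_one] at ha hb
  · exact Fin.ext (by exact_mod_cast ha)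
  · exact absurd hb (by norm_num)
  · exact absurd hb (by norm_num)
  · have : 2*m - 1 - (s:ℕ) = 2*m - 1 - (t:ℕ) := by exact_mod_cast ha
    exact Fin.ext (by omega)

lemma cpt_adj_succ [NeZero (2*m)] (hk : 2 ≤ k) (hm : 2 ≤ m) (t : Fin (2*m)) :
    (mesh k).Adj (cpt k m t) (cpt k m (t + 1)) := by
  have hn : 2 ≤ 2*m := by omega
  have ht := t.isLt
  have hval : ((t + 1 : Fin (2*m)) : ℕ) = ((t:ℕ) + 1) % (2*m) := by
    rw [Fin.val_add, fin_val_one hn]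
  rw [mesh_adj]
  rcases Nat.lt_or_ge ((t:ℕ) + 1) (2*m) with hlt | hge
  · rw [Nat.mod_eq_of_lt hlt] at hval
    by_cases h1 : (t:ℕ) + 1 < m
    · -- both on bottom row
      simp only [cpt, hval]
      rw [if_pos (by omega), if_pos (by omega), sum_pt hk]
      have e1 : ((t:ℕ):ℤ) - (((t:ℕ) + 1 : ℕ):ℤ) = -1 := by push_cast; ring
      rw [e1]; norm_num
    · by_cases h2 : (t:ℕ) + 1 = m
      · -- corner: bottom to top
        simp only [cpt, hval]
        rw [if_pos (by omega), if_neg (by omega), sum_pt hk]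
        have e2 : ((t:ℕ):ℤ) - ((2*m - 1 - ((t:ℕ)+1) : ℕ):ℤ) = 0 := by push_cast; omega
        rw [e2]; norm_num
      · -- both on top row
        simp only [cpt, hval]
        rw [if_neg (by omega), if_neg (by omega), sum_pt hk]
        have e2 : ((2*m - 1 - (t:ℕ) : ℕ):ℤ) - ((2*m - 1 - ((t:ℕ)+1) : ℕ):ℤ) = 1 := by push_cast; omega
        rw [e2]; norm_num
  · -- wrap around : t = 2m - 1
    have h2 : (t:ℕ) + 1 = 2*m := by omega
    rw [h2, Nat.mod_self] at hval
    simp only [cpt, hval]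
    rw [if_neg (by omega), if_pos (by omega), sum_pt hk]
    have e2 : ((2*m - 1 - (t:ℕ) : ℕ):ℤ) - ((0:ℕ):ℤ) = 0 := by push_cast; omega
    rw [e2]
    norm_num

def cycSub (k m : ℕ) [NeZero (2*m)] (hk : 2 ≤ k) (hm : 2 ≤ m) : (mesh k).Subgraph where
  verts := Set.range (cpt k m)
  Adj x y := ∃ t : Fin (2*m), (x = cpt k m t ∧ y = cpt k m (t+1)) ∨ (y = cpt k m t ∧ x = cpt k m (t+1))
  adj_sub := by
    rintro x y ⟨t, (⟨rfl, rfl⟩ | ⟨rfl, rfl⟩)⟩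
    · exact cpt_adj_succ hk hm t
    · exact (cpt_adj_succ hk hm t).symm
  edge_vert := by
    rintro x y ⟨t, (⟨rfl, -⟩ | ⟨-, rfl⟩)⟩
    · exact ⟨t, rfl⟩
    · exact ⟨t + 1, rfl⟩
  symm := by
    constructor
    rintro x y ⟨t, h⟩
    exact ⟨t, h.symm⟩



variable {k m : ℕ} [NeZero (2*m)]

lemma cycSub_verts_ncard (hk : 2 ≤ k) (hm : 2 ≤ m) :
    (cycSub k m hk hm).verts.ncard = 2*m := by
  show (Set.range (cpt k m)).ncard = 2*m
  rw [← Set.image_univ, Set.ncard_image_of_injective _ (cpt_inj hk hm), Set.ncard_univ]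
  simp

lemma cycSub_adj_iff (hk : 2 ≤ k) (hm : 2 ≤ m) {t : Fin (2*m)} {y : Fin k → ℤ} :
    (cycSub k m hk hm).Adj (cpt k m t) y ↔ y = cpt k m (t+1) ∨ y = cpt k m (t-1) := by
  constructor
  · rintro ⟨r, (⟨h1, h2⟩ | ⟨h1, h2⟩)⟩
    · obtain rfl := cpt_inj hk hm h1
      exact Or.inl h2
    · have hr : t = r + 1 := cpt_inj hk hm h2
      right
      rw [h1, hr]
      congr 1
      abel
  · rintro (rfl | rfl)
    · exact ⟨t, Or.inl ⟨rfl, rfl⟩⟩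
    · exact ⟨t - 1, Or.inr ⟨rfl, by congr 1; abel⟩⟩

lemma cycSub_deg (hk : 2 ≤ k) (hm : 2 ≤ m) (v : Fin k → ℤ) :
    ((cycSub k m hk hm).neighborSet v).ncard ≤ 2 := by
  by_cases hv : v ∈ Set.range (cpt k m)
  · obtain ⟨t, rfl⟩ := hv
    have hsub : (cycSub k m hk hm).neighborSet (cpt k m t)
        ⊆ {cpt k m (t+1), cpt k m (t-1)} := by
      intro y hy
      rcases (cycSub_adj_iff hk hm).mp hy with h | h <;> simp [h]
    refine le_trans (Set.ncard_le_ncard hsub (Set.toFinite _)) ?_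
    refine le_trans (Set.ncard_insert_le _ _) ?_
    simp
  · have hempty : (cycSub k m hk hm).neighborSet v = ∅ := by
      rw [Set.eq_empty_iff_forall_notMem]
      intro y hy
      exact hv (show v ∈ (cycSub k m hk hm).verts from hy.fst_mem)
    rw [hempty]
    simp

def cycHom (hk : 2 ≤ k) (hm : 2 ≤ m) : cycleGraph (2*m) →g (cycSub k m hk hm).coe where
  toFun t := ⟨cpt k m t, ⟨t, rfl⟩⟩
  map_rel' := by
    intro s t h
    rw [cycleGraph_adj'] at h
    rw [SimpleGraph.Subgraph.coe_adj]
    have hn : 2 ≤ 2*m := by omega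
    rcases h with h | h
    · have h2 : s - t = 1 := Fin.ext (by rw [h, fin_val_one hn])
      have h3 : s = t + 1 := by rw [← h2]; abel
      exact ⟨t, Or.inr ⟨rfl, by rw [h3]⟩⟩
    · have h2 : t - s = 1 := Fin.ext (by rw [h, fin_val_one hn])
      have h3 : t = s + 1 := by rw [← h2]; abel
      exact ⟨s, Or.inl ⟨rfl, by rw [h3]⟩⟩

lemma cycSub_conn (hk : 2 ≤ k) (hm : 2 ≤ m) : (cycSub k m hk hm).Connected := by
  rw [SimpleGraph.Subgraph.connected_iff']
  have hn : 2 ≤ 2*m := by omega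
  haveI : Nonempty ↥(cycSub k m hk hm).verts := ⟨cycHom hk hm ⟨0, by omega⟩⟩
  refine SimpleGraph.Connected.mk ?_
  intro u v
  obtain ⟨s, hs⟩ := u.2
  obtain ⟨t, ht⟩ := v.2
  obtain ⟨w, -⟩ := cycle_walk hn _ s t rfl
  have hu : (cycHom hk hm) s = u := Subtype.ext hs
  have hv : (cycHom hk hm) t = v := Subtype.ext ht
  rw [← hu, ← hv]
  exact (w.map (cycHom hk hm)).reachable

lemma cycSub_dist (hk : 2 ≤ k) (hm : 2 ≤ m) (u v : ↥(cycSub k m hk hm).verts) :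
    (cycSub k m hk hm).coe.dist u v ≤ m := by
  obtain ⟨s, hs⟩ := u.2
  obtain ⟨t, ht⟩ := v.2
  obtain ⟨w, hw⟩ := cycle_short_walk (D := m) (by omega) s t
  have hu : (cycHom hk hm) s = u := Subtype.ext hs
  have hv : (cycHom hk hm) t = v := Subtype.ext ht
  rw [← hu, ← hv]
  refine le_trans (SimpleGraph.dist_le (w.map (cycHom hk hm))) ?_
  rwa [SimpleGraph.Walk.length_map]

lemma set_upper {k : ℕ} (R : ℕ) (hR : 1 ≤ R) (H : (mesh k).Subgraph)
    (hfin : H.verts.Finite) (hconn : H.Connected)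
    (hdeg : ∀ v, (H.neighborSet v).ncard ≤ 2)
    (hdist : ∀ u v : H.verts, H.coe.dist u v ≤ R) : H.verts.ncard ≤ 2*R := by
  classical
  haveI : Fintype ↥H.verts := hfin.fintype
  have hc : H.coe.Connected := hconn.coe
  have hdeg' : ∀ v : ↥H.verts, (H.coe.neighborSet v).ncard ≤ 2 := by
    intro v
    calc (H.coe.neighborSet v).ncard = Nat.card (H.coe.neighborSet v) :=
          (Nat.card_coe_set_eq _).symm
      _ = Nat.card (H.neighborSet ↑v) := Nat.card_congr (SimpleGraph.Subgraph.coeNeighborSetEquiv v)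
      _ = (H.neighborSet ↑v).ncard := Nat.card_coe_set_eq _
      _ ≤ 2 := hdeg _
  have hneg2 : ∀ x : ZMod 2, -x = x := by decide
  have key : ∀ a : ℤ, ((|a| : ℤ) : ZMod 2) = ((a : ℤ) : ZMod 2) := by
    intro a
    rcases abs_choice a with h | h <;> rw [h]
    rw [Int.cast_neg, hneg2]
  set f : ↥H.verts → ZMod 2 := fun x => (((∑ i, (x : Fin k → ℤ) i : ℤ) : ZMod 2)) with hfdef
  have hf : ∀ ⦃u v : ↥H.verts⦄, H.coe.Adj u v → f u ≠ f v := by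
    intro u v h
    have hadj : (mesh k).Adj ↑u ↑v := H.adj_sub h
    have hsum : ∑ i, |(u : Fin k → ℤ) i - (v : Fin k → ℤ) i| = 1 := mesh_adj.mp hadj
    have hone : f u - f v = 1 := by
      rw [hfdef]
      show ((∑ i, (u : Fin k → ℤ) i : ℤ) : ZMod 2) - ((∑ i, (v : Fin k → ℤ) i : ℤ) : ZMod 2) = 1
      rw [← Int.cast_sub, ← Finset.sum_sub_distrib]
      calc ((∑ i, ((u : Fin k → ℤ) i - (v : Fin k → ℤ) i) : ℤ) : ZMod 2)
          = ((∑ i, |(u : Fin k → ℤ) i - (v : Fin k → ℤ) i| : ℤ) : ZMod 2) := by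
            rw [Int.cast_sum, Int.cast_sum]
            exact Finset.sum_congr rfl fun i _ => (key _).symm
        _ = ((1:ℤ) : ZMod 2) := by rw [hsum]
        _ = 1 := by norm_num
    intro heq
    rw [heq, sub_self] at hone
    exact one_ne_zero hone.symm
  haveI : DecidableRel H.coe.Adj := Classical.decRel _
  have hfinal := main_upper H.coe hc hdeg' f hf R hR hdist
  rwa [← Nat.card_coe_set_eq, Nat.card_eq_fintype_card]

lemma set_mem {k : ℕ} (hk : 2 ≤ k) (m : ℕ) (hm : 2 ≤ m) :
    ∃ H : (mesh k).Subgraph, H.verts.Finite ∧ H.Connected ∧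
      (∀ v, (H.neighborSet v).ncard ≤ 2) ∧ (∀ u v : H.verts, H.coe.dist u v ≤ m) ∧
      H.verts.ncard = 2*m := by
  haveI : NeZero (2*m) := ⟨by omega⟩
  exact ⟨cycSub k m hk hm, Set.finite_range _, cycSub_conn hk hm, cycSub_deg hk hm,
    cycSub_dist hk hm, cycSub_verts_ncard hk hm⟩

end Aux

theorem stmt8 (k p : ℕ) (hk : 2 ≤ k) (hp : 1 ≤ p) :
    (∀ n : ℕ, 1 ≤ n → (SimpleGraph.pathGraph n).diam = n - 1)
    ∧ (∀ D : ℕ, 1 ≤ D → (SimpleGraph.cycleGraph (2 * D)).diam = D)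
    ∧ IsGreatest {n : ℕ | ∃ H : (mesh k).Subgraph, H.verts.Finite ∧ H.Connected ∧
        (∀ v, (H.neighborSet v).ncard ≤ 2) ∧ (∀ u v : H.verts, H.coe.dist u v ≤ 2 * p) ∧
        H.verts.ncard = n} (4 * p)
    ∧ IsGreatest {n : ℕ | ∃ H : (mesh k).Subgraph, H.verts.Finite ∧ H.Connected ∧
        (∀ v, (H.neighborSet v).ncard ≤ 2) ∧ (∀ u v : H.verts, H.coe.dist u v ≤ 2 * p + 1) ∧
        H.verts.ncard = n} (4 * p + 2) := by
  refine ⟨Aux.path_diam, Aux.cycle_diam, ⟨?_, ?_⟩, ⟨?_, ?_⟩⟩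
  · obtain ⟨H, h1, h2, h3, h4, h5⟩ := Aux.set_mem hk (2*p) (by omega)
    exact ⟨H, h1, h2, h3, h4, by omega⟩
  · rintro n ⟨H, h1, h2, h3, h4, h5⟩
    have := Aux.set_upper (2*p) (by omega) H h1 h2 h3 h4
    omega
  · obtain ⟨H, h1, h2, h3, h4, h5⟩ := Aux.set_mem hk (2*p+1) (by omega)
    exact ⟨H, h1, h2, h3, h4, by omega⟩
  · rintro n ⟨H, h1, h2, h3, h4, h5⟩
    have := Aux.set_upper (2*p+1) (by omega) H h1 h2 h3 h4
    omega
end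

section
/- For every k >= 1 and all sufficiently large p, there exists a subgraph E_k(p) of the k-dimensional mesh containing the origin such that: every vertex has degree at most 4, the origin has degree at most 2, every vertex is at l^1 graph distance at most p from the origin, and |E_k(p)| >= (2^k p^k)/k! - C p^{k-1} for some constant C depending only on k. -/
open SimpleGraph Finset Filter Asymptotics

namespace Stmt10Aux

/-- Vertex set: ℓ¹-ball intersected with "support is an upward-closed set of indices". -/
def VS (k p : ℕ) : Set (Fin k → ℤ) :=
  {x | (∑ i, |x i|) ≤ (p : ℤ) ∧ ∀ i j : Fin k, i ≤ j → x i ≠ 0 → x j ≠ 0}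

/-- Edge relation: differ by 1 in one coordinate `i`, all earlier coordinates zero. -/
def AR (k p : ℕ) (x y : Fin k → ℤ) : Prop :=
  x ∈ VS k p ∧ y ∈ VS k p ∧
    ∃ i, (∀ j, j ≠ i → x j = y j) ∧ |x i - y i| = 1 ∧ ∀ j, j < i → x j = 0

lemma AR_mesh {k p : ℕ} {x y : Fin k → ℤ} (h : AR k p x y) : (mesh k).Adj x y := by
  obtain ⟨hx, hy, i, hoff, habs, hz⟩ := h
  have hxyne : x ≠ y := by
    intro he; rw [he] at habs; simp at habs
  have hsum : ∑ j, |x j - y j| = 1 := by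
    rw [Finset.sum_eq_single_of_mem i (Finset.mem_univ i)]
    · exact habs
    · intro j _ hj; rw [hoff j hj]; simp
  exact ⟨hxyne, Or.inl hsum⟩

def Hgraph (k p : ℕ) : (mesh k).Subgraph where
  verts := VS k p
  Adj := AR k p
  adj_sub := AR_mesh
  edge_vert := fun h => h.1
  symm := by
    constructor
    rintro x y ⟨hx, hy, i, hoff, habs, hz⟩
    refine ⟨hy, hx, i, fun j hj => (hoff j hj).symm, by rwa [abs_sub_comm], fun j hj => ?_⟩
    rw [← hoff j (Fin.ne_of_lt hj)]; exact hz j hj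

lemma origin_mem (k p : ℕ) : (fun _ => (0:ℤ)) ∈ VS k p := by
  constructor
  · simp
  · intro i j _ h; simp at h

lemma nbr_char {k p : ℕ} {v y : Fin k → ℤ} (h : y ∈ (Hgraph k p).neighborSet v) :
    ∃ i : Fin k, (∀ j, j < i → v j = 0) ∧ (∀ j, i < j → v j ≠ 0) ∧
      (y = Function.update v i (v i + 1) ∨ y = Function.update v i (v i - 1)) := by
  obtain ⟨hv, hy, i, hoff, habs, hz⟩ := h
  refine ⟨i, hz, ?_, ?_⟩
  · intro j hij
    by_cases hyi : y i = 0
    · have hvi : v i ≠ 0 := by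
        intro h0; rw [h0, hyi] at habs; simp at habs
      exact hv.2 i j (le_of_lt hij) hvi
    · have hyj : y j ≠ 0 := hy.2 i j (le_of_lt hij) hyi
      rwa [← hoff j (ne_of_gt hij)] at hyj
  · rcases (abs_eq (by norm_num : (0:ℤ) ≤ 1)).mp habs with h1 | h1
    · right; funext j
      by_cases hj : j = i
      · subst hj; rw [Function.update_self]; omega
      · rw [Function.update_of_ne hj]; exact (hoff j hj).symm
    · left; funext j
      by_cases hj : j = i
      · subst hj; rw [Function.update_self]; omega
      · rw [Function.update_of_ne hj]; exact (hoff j hj).symm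

lemma P_close {k : ℕ} {v : Fin k → ℤ} {i i' : Fin k}
    (h1 : ∀ j, j < i → v j = 0) (h2' : ∀ j, i' < j → v j ≠ 0) :
    (i:ℕ) ≤ (i':ℕ) + 1 := by
  by_contra hcon
  push_neg at hcon
  have hj : ((i':ℕ)+1) < k := lt_trans hcon i.isLt
  set j : Fin k := ⟨(i':ℕ)+1, hj⟩ with hjdef
  have hji : j < i := by simpa [Fin.lt_def, hjdef] using hcon
  have hij' : i' < j := by simp [Fin.lt_def, hjdef]
  exact (h2' j hij') (h1 j hji)

lemma ncard4 {α : Type*} (w1 w2 w3 w4 : α) : ({w1, w2, w3, w4} : Set α).ncard ≤ 4 := by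
  calc ({w1, w2, w3, w4} : Set α).ncard ≤ ({w2, w3, w4} : Set α).ncard + 1 :=
        Set.ncard_insert_le _ _
    _ ≤ (({w3, w4} : Set α).ncard + 1) + 1 := by
        have := Set.ncard_insert_le w2 ({w3, w4} : Set α); omega
    _ ≤ (({w4} : Set α).ncard + 1 + 1) + 1 := by
        have := Set.ncard_insert_le w3 ({w4} : Set α); omega
    _ ≤ 4 := by rw [Set.ncard_singleton]

lemma ncard2 {α : Type*} (w1 w2 : α) : ({w1, w2} : Set α).ncard ≤ 2 := by
  calc ({w1, w2} : Set α).ncard ≤ ({w2} : Set α).ncard + 1 := Set.ncard_insert_le _ _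
    _ ≤ 2 := by rw [Set.ncard_singleton]

lemma deg_le (k p : ℕ) (hk : 1 ≤ k) (v : Fin k → ℤ) :
    ((Hgraph k p).neighborSet v).ncard ≤ 4 := by
  classical
  by_cases hex : ∃ i : Fin k, (∀ j, j < i → v j = 0) ∧ (∀ j, i < j → v j ≠ 0)
  · obtain ⟨a, ha1, ha2⟩ := hex
    by_cases hex2 : ∃ i : Fin k, i ≠ a ∧ (∀ j, j < i → v j = 0) ∧ (∀ j, i < j → v j ≠ 0)
    · obtain ⟨b, hba, hb1, hb2⟩ := hex2
      have hsub : (Hgraph k p).neighborSet v ⊆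
          ({Function.update v a (v a + 1), Function.update v a (v a - 1),
            Function.update v b (v b + 1), Function.update v b (v b - 1)} : Set _) := by
        intro y hy
        obtain ⟨i, hi1, hi2, hi3⟩ := nbr_char hy
        have hiab : i = a ∨ i = b := by
          by_cases hia : i = a
          · exact Or.inl hia
          · right
            have c1 : (i:ℕ) ≤ (a:ℕ) + 1 := P_close hi1 ha2
            have c2 : (a:ℕ) ≤ (i:ℕ) + 1 := P_close ha1 hi2
            have c3 : (i:ℕ) ≤ (b:ℕ) + 1 := P_close hi1 hb2
            have c4 : (b:ℕ) ≤ (i:ℕ) + 1 := P_close hb1 hi2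
            have c5 : (a:ℕ) ≤ (b:ℕ) + 1 := P_close ha1 hb2
            have c6 : (b:ℕ) ≤ (a:ℕ) + 1 := P_close hb1 ha2
            have hne1 : (i:ℕ) ≠ (a:ℕ) := fun h => hia (Fin.ext h)
            have hne2 : (b:ℕ) ≠ (a:ℕ) := fun h => hba (Fin.ext h)
            exact Fin.ext (by omega)
        rcases hiab with rfl | rfl
        · rcases hi3 with rfl | rfl
          · exact Or.inl rfl
          · exact Or.inr (Or.inl rfl)
        · rcases hi3 with rfl | rfl
          · exact Or.inr (Or.inr (Or.inl rfl))
          · exact Or.inr (Or.inr (Or.inr rfl))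
      exact le_trans (Set.ncard_le_ncard hsub (Set.toFinite _)) (ncard4 _ _ _ _)
    · push_neg at hex2
      have hsub : (Hgraph k p).neighborSet v ⊆
          ({Function.update v a (v a + 1), Function.update v a (v a - 1)} : Set _) := by
        intro y hy
        obtain ⟨i, hi1, hi2, hi3⟩ := nbr_char hy
        have : i = a := by
          by_contra hia
          obtain ⟨j, hj1, hj2⟩ := hex2 i hia hi1
          exact hi2 j hj1 hj2
        subst this
        rcases hi3 with rfl | rfl
        · exact Or.inl rfl
        · exact Or.inr rfl
      exact le_trans (le_trans (Set.ncard_le_ncard hsub (Set.toFinite _)) (ncard2 _ _))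
        (by norm_num)
  · push_neg at hex
    have hsub : (Hgraph k p).neighborSet v ⊆ (∅ : Set _) := by
      intro y hy
      obtain ⟨i, hi1, hi2, _⟩ := nbr_char hy
      obtain ⟨j, hj1, hj2⟩ := hex i hi1
      exact hi2 j hj1 hj2
    have := Set.ncard_le_ncard hsub (Set.toFinite _)
    simpa using le_trans this (by simp)

lemma deg_origin (k p : ℕ) (hk : 1 ≤ k) :
    ((Hgraph k p).neighborSet (fun _ => (0:ℤ))).ncard ≤ 2 := by
  classical
  by_cases hex : ∃ i : Fin k, ∀ j : Fin k, ¬ (i < j)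
  · obtain ⟨a, ha⟩ := hex
    have hsub : (Hgraph k p).neighborSet (fun _ => (0:ℤ)) ⊆
        ({Function.update (fun _ => (0:ℤ)) a 1,
          Function.update (fun _ => (0:ℤ)) a (-1)} : Set _) := by
      intro y hy
      obtain ⟨i, hi1, hi2, hi3⟩ := nbr_char hy
      have hia : i = a := by
        by_contra hne
        rcases lt_or_gt_of_ne hne with h | h
        · exact hi2 a h rfl
        · exact ha i h
      subst hia
      simpa using hi3
    exact le_trans (Set.ncard_le_ncard hsub (Set.toFinite _)) (ncard2 _ _)
  · push_neg at hex
    have hsub : (Hgraph k p).neighborSet (fun _ => (0:ℤ)) ⊆ (∅ : Set _) := by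
      intro y hy
      obtain ⟨i, hi1, hi2, _⟩ := nbr_char hy
      obtain ⟨j, hj⟩ := hex i
      exact hi2 j hj rfl
    have := Set.ncard_le_ncard hsub (Set.toFinite _)
    simpa using le_trans this (by simp)

lemma walk_exists (k p : ℕ) (h0 : (fun _ => (0:ℤ)) ∈ (Hgraph k p).verts) :
    ∀ n : ℕ, ∀ v : Fin k → ℤ, ∀ hv : v ∈ (Hgraph k p).verts,
      (∑ i, (v i).natAbs) ≤ n →
      ∃ w : (Hgraph k p).coe.Walk ⟨v, hv⟩ ⟨fun _ => 0, h0⟩,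
        w.length ≤ ∑ i, (v i).natAbs := by
  intro n
  induction n with
  | zero =>
    intro v hv hle
    have hv0 : v = fun _ => (0:ℤ) := by
      funext i
      have h1 : (v i).natAbs ≤ ∑ j, (v j).natAbs :=
        Finset.single_le_sum (f := fun j => (v j).natAbs)
          (fun j _ => Nat.zero_le _) (Finset.mem_univ i)
      omega
    subst hv0
    exact ⟨SimpleGraph.Walk.nil, by simp⟩
  | succ n ih =>
    intro v hv hle
    by_cases hv0 : v = fun _ => (0:ℤ)
    · subst hv0
      exact ⟨SimpleGraph.Walk.nil, by simp⟩
    · classical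
      have hne : (Finset.univ.filter (fun i => v i ≠ 0)).Nonempty := by
        by_contra hcon
        rw [Finset.not_nonempty_iff_eq_empty, Finset.filter_eq_empty_iff] at hcon
        exact hv0 (funext (fun i => by simpa using hcon (Finset.mem_univ i)))
      set T := Finset.univ.filter (fun i => v i ≠ 0) with hT
      set t := T.min' hne with htdef
      have hvt : v t ≠ 0 := (Finset.mem_filter.mp (T.min'_mem hne)).2
      have hmin : ∀ j, j < t → v j = 0 := by
        intro j hj
        by_contra hj0
        have hle' : t ≤ j := T.min'_le j (Finset.mem_filter.mpr ⟨Finset.mem_univ j, hj0⟩)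
        exact absurd hj (not_lt.mpr hle')
      set s : ℤ := if 0 < v t then -1 else 1 with hsdef
      set v' := Function.update v t (v t + s) with hv'def
      have hv't : v' t = v t + s := Function.update_self t (v t + s) v
      have hv'j : ∀ j, j ≠ t → v' j = v j := fun j hj => Function.update_of_ne hj _ v
      have habs' : |v t + s| = |v t| - 1 := by
        by_cases hpos : 0 < v t
        · rw [hsdef, if_pos hpos, abs_of_pos hpos, abs_of_nonneg (by omega)]; ring
        · have hneg : v t < 0 := by omega
          rw [hsdef, if_neg hpos, abs_of_neg hneg, abs_of_nonpos (by omega)]; ring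
      have hsplit : ∀ u : Fin k → ℤ, ∑ i, |u i| = |u t| + ∑ i ∈ Finset.univ.erase t, |u i| :=
        fun u => (Finset.add_sum_erase Finset.univ (fun i => |u i|) (Finset.mem_univ t)).symm
      have herase : ∑ i ∈ Finset.univ.erase t, |v' i| = ∑ i ∈ Finset.univ.erase t, |v i| :=
        Finset.sum_congr rfl (fun i hi => by rw [hv'j i (Finset.ne_of_mem_erase hi)])
      have hsum' : ∑ i, |v' i| = (∑ i, |v i|) - 1 := by
        rw [hsplit v', hsplit v, herase, hv't, habs']
        ring
      have hnat : ∀ u : Fin k → ℤ, ((∑ i, (u i).natAbs : ℕ) : ℤ) = ∑ i, |u i| := by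
        intro u
        push_cast
        rfl
      have hsumnat : (∑ i, (v' i).natAbs) + 1 = ∑ i, (v i).natAbs := by
        have h1 := hnat v'
        have h2 := hnat v
        have h3 : (0:ℤ) < ∑ i, |v i| := by
          rw [hsplit v]
          have : (0:ℤ) < |v t| := abs_pos.mpr hvt
          have hnn : (0:ℤ) ≤ ∑ i ∈ Finset.univ.erase t, |v i| :=
            Finset.sum_nonneg (fun i _ => abs_nonneg _)
          omega
        omega
      have hv'mem : v' ∈ VS k p := by
        refine ⟨?_, ?_⟩
        · rw [hsum']
          have := hv.1
          omega
        · intro i j hij hi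
          have hvi : v i ≠ 0 := by
            by_cases hit : i = t
            · subst hit; exact hvt
            · rwa [hv'j i hit] at hi
          have hvj : v j ≠ 0 := hv.2 i j hij hvi
          by_cases hjt : j = t
          · subst hjt
            by_cases hit : i = t
            · subst hit; exact hi
            · exact absurd (hmin i (lt_of_le_of_ne hij hit)) hvi
          · rwa [hv'j j hjt]
      have hadj : (Hgraph k p).Adj v v' := by
        refine ⟨hv, hv'mem, t, fun j hj => (hv'j j hj).symm, ?_, hmin⟩
        rw [hv't]
        have : v t - (v t + s) = -s := by ring
        rw [this]
        by_cases hpos : 0 < v t <;> simp [hsdef, hpos]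
      obtain ⟨w', hw'⟩ := ih v' hv'mem (by omega)
      refine ⟨SimpleGraph.Walk.cons (by exact hadj) w', ?_⟩
      change w'.length + 1 ≤ _
      omega

/-- Finset of points with all coordinates nonzero and ℓ¹ norm ≤ p. -/
def Wfin : (k : ℕ) → ℕ → Finset (Fin k → ℤ)
  | 0, _ => {(fun i => i.elim0)}
  | (k+1), p => (Finset.range p).biUnion (fun q =>
      (Wfin k q).image (Fin.cons ((p:ℤ) - q)) ∪
      (Wfin k q).image (Fin.cons (-((p:ℤ) - q))))

lemma mem_Wfin_succ {k p : ℕ} {x : Fin (k+1) → ℤ} (hx : x ∈ Wfin (k+1) p) :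
    ∃ q < p, ∃ y ∈ Wfin k q, x = Fin.cons ((p:ℤ) - q) y ∨ x = Fin.cons (-((p:ℤ) - q)) y := by
  simp only [Wfin, Finset.mem_biUnion, Finset.mem_union, Finset.mem_image,
    Finset.mem_range] at hx
  obtain ⟨q, hq, hcase⟩ := hx
  rcases hcase with ⟨y, hy, h⟩ | ⟨y, hy, h⟩
  · exact ⟨q, hq, y, hy, Or.inl h.symm⟩
  · exact ⟨q, hq, y, hy, Or.inr h.symm⟩

lemma Wfin_nonzero : ∀ {k p : ℕ} {x : Fin k → ℤ}, x ∈ Wfin k p → ∀ i, x i ≠ 0 := by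
  intro k
  induction k with
  | zero => intro p x _ i; exact i.elim0
  | succ k ih =>
    intro p x hx i
    obtain ⟨q, hq, y, hy, hc⟩ := mem_Wfin_succ hx
    have hj : ((p:ℤ) - q) ≠ 0 := by
      have : (q:ℤ) < p := by exact_mod_cast hq
      omega
    rcases hc with rfl | rfl
    · refine Fin.cases ?_ (fun i' => ?_) i
      · simpa using hj
      · simpa using ih hy i'
    · refine Fin.cases ?_ (fun i' => ?_) i
      · simp only [Fin.cons_zero, ne_eq, neg_eq_zero]; exact hj
      · simpa using ih hy i'

lemma Wfin_sum : ∀ {k p : ℕ} {x : Fin k → ℤ}, x ∈ Wfin k p → ∑ i, |x i| ≤ (p:ℤ) := by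
  intro k
  induction k with
  | zero => intro p x _; simp
  | succ k ih =>
    intro p x hx
    obtain ⟨q, hq, y, hy, hc⟩ := mem_Wfin_succ hx
    have h1 : (q:ℤ) < p := by exact_mod_cast hq
    have h2 : ∑ i, |y i| ≤ (q:ℤ) := ih hy
    rcases hc with rfl | rfl <;>
      rw [Fin.sum_univ_succ] <;>
      simp only [Fin.cons_zero, Fin.cons_succ, abs_neg] <;>
      rw [abs_of_pos (by omega)] <;> omega

lemma Wfin_card (k p : ℕ) :
    (Wfin (k+1) p).card = ∑ q ∈ Finset.range p, 2 * (Wfin k q).card := by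
  rw [Wfin, Finset.card_biUnion]
  · apply Finset.sum_congr rfl
    intro q hq
    have hq' : (q:ℤ) < p := by exact_mod_cast Finset.mem_range.mp hq
    rw [Finset.card_union_of_disjoint,
      Finset.card_image_of_injective _ (Fin.cons_right_injective _),
      Finset.card_image_of_injective _ (Fin.cons_right_injective _)]
    · ring
    · rw [Finset.disjoint_left]
      rintro x hx1 hx2
      obtain ⟨y, _, rfl⟩ := Finset.mem_image.mp hx1
      obtain ⟨z, _, hz⟩ := Finset.mem_image.mp hx2
      have := congrArg (fun f => f 0) hz
      simp only [Fin.cons_zero] at this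
      omega
  · intro q1 hq1 q2 hq2 hne
    have h1 : (q1:ℤ) < p := by exact_mod_cast Finset.mem_range.mp hq1
    have h2 : (q2:ℤ) < p := by exact_mod_cast Finset.mem_range.mp hq2
    rw [Function.onFun, Finset.disjoint_left]
    rintro x hx1 hx2
    have habs : ∀ q : ℕ, (q:ℤ) < p →
        x ∈ (Wfin k q).image (Fin.cons ((p:ℤ) - q)) ∪
            (Wfin k q).image (Fin.cons (-((p:ℤ) - q))) → |x 0| = (p:ℤ) - q := by
      intro q hqp hx
      rcases Finset.mem_union.mp hx with hx | hx <;>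
        obtain ⟨y, _, rfl⟩ := Finset.mem_image.mp hx <;>
        simp only [Fin.cons_zero, abs_neg] <;> rw [abs_of_pos (by omega)]
    have e1 := habs q1 h1 hx1
    have e2 := habs q2 h2 hx2
    exact hne (by omega)

lemma pow_sub_pow_le (n : ℕ) (q : ℕ) :
    ((q:ℝ)+1)^(n+1) - (q:ℝ)^(n+1) ≤ ((n:ℝ)+1) * ((q:ℝ)+1)^n := by
  induction n with
  | zero => simp
  | succ n ih =>
    have hq : (0:ℝ) ≤ q := Nat.cast_nonneg q
    have hle : (q:ℝ)^(n+1) ≤ ((q:ℝ)+1)^(n+1) :=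
      pow_le_pow_left₀ hq (by linarith) (n+1)
    calc ((q:ℝ)+1)^(n+1+1) - (q:ℝ)^(n+1+1)
        = ((q:ℝ)+1)*(((q:ℝ)+1)^(n+1) - (q:ℝ)^(n+1)) + (q:ℝ)^(n+1) := by ring
      _ ≤ ((q:ℝ)+1)*(((n:ℝ)+1) * ((q:ℝ)+1)^n) + ((q:ℝ)+1)^(n+1) :=
          add_le_add (mul_le_mul_of_nonneg_left ih (by linarith)) hle
      _ = ((n:ℝ)+1+1) * ((q:ℝ)+1)^(n+1) := by ring
      _ = (((n+1:ℕ):ℝ)+1) * ((q:ℝ)+1)^(n+1) := by push_cast; ring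

lemma sum_pow_ge (n p : ℕ) :
    (p:ℝ)^(n+1) ≤ ((n:ℝ)+1) * ∑ q ∈ Finset.range p, ((q:ℝ)+1)^n := by
  have h := Finset.sum_range_sub (f := fun q : ℕ => (q:ℝ)^(n+1)) p
  have h2 : ∑ q ∈ Finset.range p, (((q:ℝ)+1)^(n+1) - (q:ℝ)^(n+1)) = (p:ℝ)^(n+1) := by
    rw [Finset.sum_congr rfl (fun (q : ℕ) (_ : q ∈ Finset.range p) =>
        show (((q:ℝ)+1)^(n+1) - (q:ℝ)^(n+1))
        = (((q+1:ℕ):ℝ)^(n+1) - ((q:ℕ):ℝ)^(n+1)) by push_cast; ring), h]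
    simp [zero_pow (Nat.succ_ne_zero n)]
  calc (p:ℝ)^(n+1) = ∑ q ∈ Finset.range p, (((q:ℝ)+1)^(n+1) - (q:ℝ)^(n+1)) := h2.symm
    _ ≤ ∑ q ∈ Finset.range p, ((n:ℝ)+1) * ((q:ℝ)+1)^n :=
        Finset.sum_le_sum (fun q _ => pow_sub_pow_le n q)
    _ = ((n:ℝ)+1) * ∑ q ∈ Finset.range p, ((q:ℝ)+1)^n := by rw [Finset.mul_sum]

lemma Wfin_lb (k : ℕ) (hk : 1 ≤ k) : ∃ C : ℝ, 0 ≤ C ∧ ∀ p : ℕ,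
    2 ^ k * (p : ℝ) ^ k / k.factorial - C * (p : ℝ) ^ (k - 1) ≤ (Wfin k p).card := by
  induction k, hk using Nat.le_induction with
  | base =>
    refine ⟨0, le_rfl, fun p => ?_⟩
    have h1 : (Wfin 1 p).card = 2 * p := by
      rw [Wfin_card 0 p]
      simp [Wfin, Nat.mul_comm]
    rw [h1]
    push_cast
    norm_num [Nat.factorial]
  | succ k hk1 ih =>
    obtain ⟨C, hC0, hC⟩ := ih
    refine ⟨2^(k+1)/k.factorial + 2*C, by positivity, fun p => ?_⟩
    set S1 : ℝ := ∑ q ∈ Finset.range p, (q:ℝ)^k with hS1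
    set S2 : ℝ := ∑ q ∈ Finset.range p, (q:ℝ)^(k-1) with hS2
    have hcard : (((Wfin (k+1) p).card : ℕ) : ℝ)
        = ∑ q ∈ Finset.range p, 2 * (((Wfin k q).card : ℕ) : ℝ) := by
      rw [Wfin_card k p]; push_cast; ring
    -- bound each summand by induction hypothesis
    have hsumN : ∑ q ∈ Finset.range p, 2 * (2 ^ k * (q:ℝ)^k / k.factorial - C * (q:ℝ)^(k-1))
        ≤ ∑ q ∈ Finset.range p, 2 * (((Wfin k q).card : ℕ) : ℝ) :=
      Finset.sum_le_sum (fun q _ => by linarith [hC q])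
    have hsplit : ∑ q ∈ Finset.range p, 2 * (2 ^ k * (q:ℝ)^k / k.factorial - C * (q:ℝ)^(k-1))
        = (2 * 2^k / k.factorial) * S1 - (2*C) * S2 := by
      rw [hS1, hS2, Finset.mul_sum, Finset.mul_sum, ← Finset.sum_sub_distrib]
      apply Finset.sum_congr rfl
      intro q _
      ring
    -- lower bound for S1
    have hsg := sum_pow_ge k p
    have hshift : ∑ q ∈ Finset.range p, ((q:ℝ)+1)^k ≤ S1 + (p:ℝ)^k := by
      have e : ∑ q ∈ Finset.range p, ((q:ℝ)+1)^k
          = ∑ q ∈ Finset.range p, (((q+1:ℕ)):ℝ)^k :=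
        Finset.sum_congr rfl (fun q _ => by push_cast; ring)
      have e2 : ∑ q ∈ Finset.range (p+1), ((q:ℕ):ℝ)^k
          = ∑ q ∈ Finset.range p, (((q+1:ℕ)):ℝ)^k + ((0:ℕ):ℝ)^k :=
        Finset.sum_range_succ' (fun q : ℕ => ((q:ℕ):ℝ)^k) p
      have e3 : ∑ q ∈ Finset.range (p+1), ((q:ℕ):ℝ)^k = S1 + (p:ℝ)^k :=
        Finset.sum_range_succ (fun q : ℕ => ((q:ℕ):ℝ)^k) p
      have hz : ((0:ℕ):ℝ)^k = 0 := by
        rw [Nat.cast_zero]; exact zero_pow (by omega)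
      rw [e]
      linarith [e2, e3, hz.le, hz.ge]
    have hS1lb : (p:ℝ)^(k+1)/((k:ℝ)+1) - (p:ℝ)^k ≤ S1 := by
      have hpos : (0:ℝ) < (k:ℝ)+1 := by positivity
      rw [sub_le_iff_le_add, div_le_iff₀ hpos]
      nlinarith [hsg, hshift]
    -- upper bound for S2
    have hS2ub : S2 ≤ (p:ℝ)^k := by
      have : S2 ≤ (Finset.range p).card • (p:ℝ)^(k-1) := by
        apply Finset.sum_le_card_nsmul
        intro q hq
        exact pow_le_pow_left₀ (Nat.cast_nonneg q)
          (by exact_mod_cast (Finset.mem_range.mp hq).le) (k-1)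
      rw [Finset.card_range, nsmul_eq_mul] at this
      calc S2 ≤ (p:ℝ) * (p:ℝ)^(k-1) := this
        _ = (p:ℝ)^(k-1+1) := by rw [pow_succ]; ring
        _ = (p:ℝ)^k := by congr 1; omega
    have heq : (2^(k+1):ℝ) * (p:ℝ)^(k+1) / ((k+1).factorial : ℝ)
        = (2*2^k / (k.factorial:ℝ)) * ((p:ℝ)^(k+1)/((k:ℝ)+1)) := by
      rw [Nat.factorial_succ]
      have h1 : ((k.factorial : ℕ) : ℝ) ≠ 0 := by positivity
      push_cast
      field_simp
      ring
    have hfac : (0:ℝ) ≤ 2 * 2^k / (k.factorial:ℝ) := by positivity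
    have e1 : (2*2^k / (k.factorial:ℝ)) * ((p:ℝ)^(k+1)/((k:ℝ)+1) - (p:ℝ)^k)
        ≤ (2*2^k / (k.factorial:ℝ)) * S1 := mul_le_mul_of_nonneg_left hS1lb hfac
    have e2 : (2*C) * S2 ≤ (2*C) * (p:ℝ)^k :=
      mul_le_mul_of_nonneg_left hS2ub (by positivity)
    have hk1e : (k + 1) - 1 = k := by omega
    rw [hcard, hk1e]
    calc 2 ^ (k+1) * (p:ℝ)^(k+1) / ((k+1).factorial : ℝ)
          - (2^(k+1)/k.factorial + 2*C) * (p:ℝ)^k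
        ≤ (2*2^k / (k.factorial:ℝ)) * S1 - (2*C) * S2 := by
          rw [heq]
          have : (2^(k+1):ℝ)/k.factorial = 2*2^k/(k.factorial:ℝ) := by ring
          rw [this]
          linarith [e1, e2]
      _ = ∑ q ∈ Finset.range p, 2 * (2 ^ k * (q:ℝ)^k / k.factorial - C * (q:ℝ)^(k-1)) :=
          hsplit.symm
      _ ≤ ∑ q ∈ Finset.range p, 2 * (((Wfin k q).card : ℕ) : ℝ) := hsumN

lemma Wfin_subset_VS (k p : ℕ) : ↑(Wfin k p) ⊆ VS k p := by
  intro x hx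
  exact ⟨Wfin_sum hx, fun i j _ _ => Wfin_nonzero hx j⟩

lemma VS_finite (k p : ℕ) : (VS k p).Finite := by
  apply Set.Finite.subset (Finset.finite_toSet
    (Finset.Icc (fun _ : Fin k => -(p:ℤ)) (fun _ => (p:ℤ))))
  intro x hx
  simp only [Finset.coe_Icc, Set.mem_Icc]
  have key : ∀ i, |x i| ≤ (p:ℤ) := by
    intro i
    calc |x i| ≤ ∑ j, |x j| :=
          Finset.single_le_sum (fun j _ => abs_nonneg (x j)) (Finset.mem_univ i)
      _ ≤ (p:ℤ) := hx.1
  constructor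
  · intro i; have := (abs_le.mp (key i)).1; exact this
  · intro i; exact (abs_le.mp (key i)).2

end Stmt10Aux

open Stmt10Aux in
theorem stmt10 (k : ℕ) (hk : 1 ≤ k) :
    ∃ C : ℝ, ∃ p0 : ℕ, ∀ p : ℕ, p0 ≤ p →
      ∃ H : (mesh k).Subgraph, ∃ h0 : (fun _ => (0 : ℤ)) ∈ H.verts,
        (∀ v, (H.neighborSet v).ncard ≤ 4)
        ∧ (H.neighborSet (fun _ => (0 : ℤ))).ncard ≤ 2
        ∧ (∀ v : H.verts, H.coe.Reachable v ⟨fun _ => 0, h0⟩ ∧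
            H.coe.dist v ⟨fun _ => 0, h0⟩ ≤ p)
        ∧ 2 ^ k * (p : ℝ) ^ k / k.factorial - C * (p : ℝ) ^ (k - 1) ≤ H.verts.ncard := by
  obtain ⟨C, hC0, hC⟩ := Wfin_lb k hk
  refine ⟨C, 0, fun p _ => ⟨Hgraph k p, origin_mem k p, deg_le k p hk, deg_origin k p hk,
    ?_, ?_⟩⟩
  · intro ⟨v, hv⟩
    obtain ⟨w, hw⟩ := walk_exists k p (origin_mem k p) (∑ i, (v i).natAbs) v hv le_rfl
    have hsp : (∑ i, (v i).natAbs) ≤ p := by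
      have := hv.1
      have h2 : ((∑ i, (v i).natAbs : ℕ) : ℤ) ≤ (p:ℤ) := by
        push_cast
        exact this
      exact_mod_cast h2
    exact ⟨⟨w⟩, le_trans (SimpleGraph.dist_le w) (le_trans hw hsp)⟩
  · calc 2 ^ k * (p : ℝ) ^ k / k.factorial - C * (p : ℝ) ^ (k - 1)
        ≤ (Wfin k p).card := hC p
      _ = ((Wfin k p : Set (Fin k → ℤ)).ncard : ℝ) := by rw [Set.ncard_coe_finset]
      _ ≤ ((Hgraph k p).verts.ncard : ℝ) := by
          exact_mod_cast Nat.cast_le.mpr (Set.ncard_le_ncard (Wfin_subset_VS k p) (VS_finite k p))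
end
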